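/- arXiv:0805.3620 — 4 statements merged into one kernel-verified Lean document; each statement's English description precedes it below -/
import Mathlib

section
/- Let π : ℕ → [0,1] be a sequence satisfying π_{m+n} ≥ π_m · π_n · c^{(m+n)^{3/4} log₂(m+n)} for all sufficiently large m, n, where 0 < c < 1, and suppose π_n > 0 for all large n. Then the limit lim_{n→∞} (−(1/n) log π_n) exists in [0, ∞]. -/
open Filter

noncomputable def GG (N : ℕ) : ℝ := (N : ℝ) ^ ((3:ℝ)/4) * Real.logb 2 (N : ℝ)

noncomputable def rr : ℝ := (2:ℝ) ^ (-(1:ℝ)/8)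

noncomputable def EE (K : ℝ) (n : ℕ) : ℝ :=
  K * (8 / Real.log 2 + 2 + Real.logb 2 (n : ℝ)) / (n : ℝ) ^ ((1:ℝ)/4)

lemma rr_pos : 0 < rr := Real.rpow_pos_of_pos two_pos _

lemma rr_lt_one : rr < 1 :=
  Real.rpow_lt_one_of_one_lt_of_neg one_lt_two (by norm_num)

lemma one_sub_rr_pos : 0 < 1 - rr := by linarith [rr_lt_one]

lemma geom_bound (k : ℕ) : ∑ i ∈ Finset.range k, rr ^ i ≤ 1 / (1 - rr) := by
  have h0 := rr_pos
  have h1 := rr_lt_one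
  rw [geom_sum_eq h1.ne]
  have he : (rr ^ k - 1) / (rr - 1) = (1 - rr ^ k) / (1 - rr) := by
    rw [← neg_div_neg_eq]; ring_nf
  rw [he]
  gcongr
  · have : 0 ≤ rr ^ k := pow_nonneg h0.le k
    linarith

lemma GG_nonneg {N : ℕ} (h : 1 ≤ N) : 0 ≤ GG N := by
  have h1 : (1:ℝ) ≤ (N:ℝ) := by exact_mod_cast h
  exact mul_nonneg (Real.rpow_nonneg (by linarith) _) (Real.logb_nonneg one_lt_two h1)

lemma GG_mono {p q : ℕ} (h1 : 1 ≤ p) (h : p ≤ q) : GG p ≤ GG q := by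
  have hp1 : (1:ℝ) ≤ (p:ℝ) := by exact_mod_cast h1
  have hpq : (p:ℝ) ≤ (q:ℝ) := by exact_mod_cast h
  apply mul_le_mul
  · exact Real.rpow_le_rpow (by linarith) hpq (by norm_num)
  · exact (Real.logb_le_logb one_lt_two (by linarith) (by linarith)).mpr hpq
  · exact Real.logb_nonneg one_lt_two hp1
  · exact Real.rpow_nonneg (by linarith) _

lemma EE_nonneg {K : ℝ} (hK : 0 ≤ K) {n : ℕ} (hn : 1 ≤ n) : 0 ≤ EE K n := by
  have h1 : (1:ℝ) ≤ (n:ℝ) := by exact_mod_cast hn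
  have hl2 : 0 < Real.log 2 := Real.log_pos one_lt_two
  have hlb : 0 ≤ Real.logb 2 (n:ℝ) := Real.logb_nonneg one_lt_two h1
  apply div_nonneg
  · apply mul_nonneg hK
    positivity
  · exact Real.rpow_nonneg (by linarith) _

-- k * 2^{-k/8} ≤ 8 / log 2
lemma k_mul_le (k : ℕ) : (k : ℝ) * (2:ℝ) ^ (-((k:ℝ)/8)) ≤ 8 / Real.log 2 := by
  have hl2 : 0 < Real.log 2 := Real.log_pos one_lt_two
  have hexp : (k:ℝ) * Real.log 2 / 8 ≤ Real.exp ((k:ℝ) * Real.log 2 / 8) := by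
    have := Real.add_one_le_exp ((k:ℝ) * Real.log 2 / 8)
    linarith
  have hrw : (2:ℝ) ^ ((k:ℝ)/8) = Real.exp ((k:ℝ) * Real.log 2 / 8) := by
    rw [Real.rpow_def_of_pos two_pos]; ring_nf
  have hpos : (0:ℝ) < (2:ℝ) ^ ((k:ℝ)/8) := Real.rpow_pos_of_pos two_pos _
  have hk : (k : ℝ) ≤ (8 / Real.log 2) * (2:ℝ) ^ ((k:ℝ)/8) := by
    rw [hrw]
    rw [div_mul_eq_mul_div, le_div_iff₀ hl2]
    nlinarith
  have hneg : (2:ℝ) ^ (-((k:ℝ)/8)) = ((2:ℝ) ^ ((k:ℝ)/8))⁻¹ := Real.rpow_neg (by norm_num) _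
  rw [hneg, mul_inv_le_iff₀ hpos]
  linarith [hk]

lemma rr_pow_eq (k : ℕ) : rr ^ k = (2:ℝ) ^ (-((k:ℝ)/8)) := by
  rw [rr, ← Real.rpow_natCast ((2:ℝ) ^ (-(1:ℝ)/8)) k, ← Real.rpow_mul (by norm_num)]
  ring_nf
-- step_bound
lemma step_bound {K : ℝ} (hK : 0 ≤ K) {n k s : ℕ} (hn : 2 ≤ n)
    (h1 : 2 ^ k * n < s) (h2 : s ≤ 2 ^ (k + 1) * n) :
    K * GG s / s ≤ EE K n * rr ^ k := by
  have hl2 : 0 < Real.log 2 := Real.log_pos one_lt_two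
  have hn1 : (1:ℝ) ≤ (n:ℝ) := by exact_mod_cast Nat.one_le_of_lt hn
  have hs_posn : 0 < s := lt_of_le_of_lt (Nat.zero_le _) h1
  have hs0 : (0:ℝ) < (s:ℝ) := by exact_mod_cast hs_posn
  have hpk : (0:ℝ) < (2:ℝ) ^ (k:ℕ) := by positivity
  have hlow : ((2:ℝ) ^ k * n) ≤ (s:ℝ) := by
    have : ((2 ^ k * n : ℕ) : ℝ) ≤ (s:ℝ) := by exact_mod_cast h1.le
    push_cast at this; linarith
  have hhigh : (s:ℝ) ≤ (2:ℝ) ^ (k+1) * n := by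
    have : ((s:ℕ):ℝ) ≤ ((2 ^ (k+1) * n : ℕ) : ℝ) := by exact_mod_cast h2
    push_cast at this; linarith
  -- logb bound
  have hLn : 0 ≤ Real.logb 2 (n:ℝ) := Real.logb_nonneg one_lt_two hn1
  have hlogb : Real.logb 2 (s:ℝ) ≤ ((k:ℝ) + 1) + Real.logb 2 (n:ℝ) := by
    have h1' : Real.logb 2 (s:ℝ) ≤ Real.logb 2 ((2:ℝ) ^ (k+1) * n) := by
      apply (Real.logb_le_logb one_lt_two hs0 (by positivity)).mpr hhigh
    have h2' : Real.logb 2 ((2:ℝ) ^ (k+1) * n) = ((k:ℝ) + 1) + Real.logb 2 (n:ℝ) := by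
      rw [Real.logb_mul (by positivity) (by positivity), Real.logb_pow,
        Real.logb_self_eq_one one_lt_two]
      push_cast; ring
    linarith
  -- rpow bound : s^{-1/4} ≤ (2^k n)^{-1/4}
  have hsq : GG s / s = Real.logb 2 (s:ℝ) * (s:ℝ) ^ (-(1:ℝ)/4) := by
    rw [GG]
    rw [mul_comm, mul_div_assoc]
    congr 1
    rw [show (-(1:ℝ)/4) = (3:ℝ)/4 - 1 by norm_num, Real.rpow_sub hs0, Real.rpow_one]
  have hrp : (s:ℝ) ^ (-(1:ℝ)/4) ≤ ((2:ℝ)^k * n) ^ (-(1:ℝ)/4) := by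
    have e1 : (s:ℝ) ^ (-(1:ℝ)/4) = ((s:ℝ) ^ ((1:ℝ)/4))⁻¹ := by
      rw [show (-(1:ℝ)/4) = -((1:ℝ)/4) by norm_num, Real.rpow_neg hs0.le]
    have e2 : ((2:ℝ)^k * (n:ℝ)) ^ (-(1:ℝ)/4) = (((2:ℝ)^k * (n:ℝ)) ^ ((1:ℝ)/4))⁻¹ := by
      rw [show (-(1:ℝ)/4) = -((1:ℝ)/4) by norm_num, Real.rpow_neg (by positivity)]
    rw [e1, e2]
    exact inv_anti₀ (by positivity)
      (Real.rpow_le_rpow (by positivity) hlow (by norm_num))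
  have hsplit : ((2:ℝ)^k * n) ^ (-(1:ℝ)/4)
      = (2:ℝ) ^ (-((k:ℝ)/4)) * (n:ℝ) ^ (-(1:ℝ)/4) := by
    rw [Real.mul_rpow (by positivity) (by positivity)]
    congr 1
    rw [← Real.rpow_natCast (2:ℝ) k, ← Real.rpow_mul (by norm_num)]
    ring_nf
  -- numeric core
  set L := Real.logb 2 (n:ℝ) with hL
  set t := (2:ℝ) ^ (-((k:ℝ)/8)) with ht
  have ht0 : 0 < t := Real.rpow_pos_of_pos two_pos _
  have ht1 : t ≤ 1 :=
    Real.rpow_le_one_of_one_le_of_nonpos one_le_two (neg_nonpos.mpr (by positivity))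
  have htt : (2:ℝ) ^ (-((k:ℝ)/4)) = t * t := by
    rw [ht, ← Real.rpow_add two_pos]; ring_nf
  have hkt : (k:ℝ) * t ≤ 8 / Real.log 2 := k_mul_le k
  have hcore : (((k:ℝ) + 1) + L) * t ≤ 8 / Real.log 2 + 2 + L := by
    have h1t : (1 + L) * t ≤ 1 + L := by nlinarith
    nlinarith
  -- assemble
  have hEE : EE K n * rr ^ k = K * ((8 / Real.log 2 + 2 + L) * t) * (n:ℝ) ^ (-(1:ℝ)/4) := by
    rw [EE, rr_pow_eq, ← ht, ← hL]
    rw [show (-(1:ℝ)/4) = -((1:ℝ)/4) by norm_num, Real.rpow_neg (by linarith)]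
    field_simp
  calc K * GG s / s = K * (GG s / s) := by ring
    _ = K * (Real.logb 2 (s:ℝ) * (s:ℝ) ^ (-(1:ℝ)/4)) := by rw [hsq]
    _ ≤ K * ((((k:ℝ) + 1) + L) * ((2:ℝ) ^ (-((k:ℝ)/4)) * (n:ℝ) ^ (-(1:ℝ)/4))) := by
        apply mul_le_mul_of_nonneg_left ?_ hK
        apply mul_le_mul hlogb ?_ ?_ (by positivity)
        · rw [← hsplit]; exact hrp
        · positivity
    _ = K * (((((k:ℝ) + 1) + L) * t) * (t * (n:ℝ) ^ (-(1:ℝ)/4))) := by rw [htt]; ring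
    _ ≤ K * ((8 / Real.log 2 + 2 + L) * (t * (n:ℝ) ^ (-(1:ℝ)/4))) := by
        apply mul_le_mul_of_nonneg_left ?_ hK
        apply mul_le_mul_of_nonneg_right hcore (by positivity)
    _ = EE K n * rr ^ k := by rw [hEE]; ring
section Aux
variable {a : ℕ → ℝ} {K : ℝ} {m : ℕ}

theorem chain_doubling (hm : 2 ≤ m) (hK : 0 < K)
    (hsub : ∀ p q, m ≤ p → m ≤ q → a (p + q) ≤ a p + a q + K * GG (p + q))
    {n : ℕ} (hn : m ≤ n) :
    ∀ k : ℕ, a (2 ^ k * n) / ((2 ^ k * n : ℕ) : ℝ)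
      ≤ a n / n + EE K n * ∑ i ∈ Finset.range k, rr ^ i := by
  have hn2 : 2 ≤ n := hm.trans hn
  intro k
  induction k with
  | zero => simp
  | succ k ih =>
    have hkn : m ≤ 2 ^ k * n :=
      le_trans hn (Nat.le_mul_of_pos_left n (Nat.pow_pos (n := k) (by norm_num)))
    have hstep := hsub (2 ^ k * n) (2 ^ k * n) hkn hkn
    have hsum : 2 ^ k * n + 2 ^ k * n = 2 ^ (k+1) * n := by ring
    rw [hsum] at hstep
    have hS0 : (0:ℝ) < ((2 ^ k * n : ℕ) : ℝ) := by
      have : 0 < 2 ^ k * n := Nat.mul_pos (Nat.pow_pos (n := k) (by norm_num)) (by omega)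
      exact_mod_cast this
    have hS20 : (0:ℝ) < ((2 ^ (k+1) * n : ℕ) : ℝ) := by
      have : 0 < 2 ^ (k+1) * n := Nat.mul_pos (Nat.pow_pos (n := k+1) (by norm_num)) (by omega)
      exact_mod_cast this
    have hcast : ((2 ^ (k+1) * n : ℕ) : ℝ) = 2 * ((2 ^ k * n : ℕ) : ℝ) := by
      push_cast; ring
    have h1 : a (2^(k+1)*n) / ((2^(k+1)*n : ℕ):ℝ)
        ≤ (2 * a (2^k*n) + K * GG (2^(k+1)*n)) / ((2^(k+1)*n : ℕ):ℝ) := by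
      gcongr
      linarith [hstep]
    have h2 : (2 * a (2^k*n) + K * GG (2^(k+1)*n)) / ((2^(k+1)*n : ℕ):ℝ)
        = a (2^k*n)/((2^k*n:ℕ):ℝ) + K*GG (2^(k+1)*n)/((2^(k+1)*n:ℕ):ℝ) := by
      rw [hcast]; field_simp
    have h3 : K * GG (2^(k+1)*n) / ((2^(k+1)*n:ℕ):ℝ) ≤ EE K n * rr ^ k := by
      apply step_bound hK.le hn2
      · have hp : 0 < 2^k*n := Nat.mul_pos (Nat.pow_pos (n := k) (by norm_num)) (by omega)
        have he : 2^(k+1)*n = 2*(2^k*n) := by ring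
        omega
      · exact le_refl _
    rw [Finset.sum_range_succ]
    calc a (2^(k+1)*n) / ((2^(k+1)*n : ℕ):ℝ)
        ≤ a (2^k*n)/((2^k*n:ℕ):ℝ) + K*GG (2^(k+1)*n)/((2^(k+1)*n:ℕ):ℝ) := by
          rw [← h2]; exact h1
      _ ≤ (a n / n + EE K n * ∑ i ∈ Finset.range k, rr ^ i) + EE K n * rr ^ k := by
          exact add_le_add ih h3
      _ = a n / n + EE K n * (∑ i ∈ Finset.range k, rr ^ i + rr ^ k) := by ring

theorem iterate_add (hm : 2 ≤ m)  (hK : 0 < K)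
    (hsub : ∀ p q, m ≤ p → m ≤ q → a (p + q) ≤ a p + a q + K * GG (p + q))
    {n s : ℕ} (hn : m ≤ n) (hs : m ≤ s) :
    ∀ q : ℕ, a (q * n + s) ≤ q * a n + a s + K * q * GG (q * n + s) := by
  intro q
  induction q with
  | zero => simp
  | succ q ih =>
    have hqs : m ≤ q * n + s := le_trans hs (Nat.le_add_left _ _)
    have hstep := hsub n (q * n + s) hn hqs
    have hq2 : 2 ≤ q * n + s := hm.trans hqs
    have hmono : GG (q * n + s) ≤ GG ((q+1) * n + s) := by
      apply GG_mono (by omega) (by nlinarith)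
    have heq : n + (q * n + s) = (q+1) * n + s := by ring
    rw [heq] at hstep
    have hKq : (0:ℝ) ≤ K * q := mul_nonneg hK.le (Nat.cast_nonneg q)
    have : K * (q:ℝ) * GG (q * n + s) ≤ K * (q:ℝ) * GG ((q+1) * n + s) :=
      mul_le_mul_of_nonneg_left hmono hKq
    calc a ((q+1) * n + s) ≤ a n + a (q * n + s) + K * GG ((q+1) * n + s) := hstep
      _ ≤ a n + ((q:ℝ) * a n + a s + K * (q:ℝ) * GG (q * n + s)) + K * GG ((q+1) * n + s) := by
          linarith [ih]
      _ ≤ a n + ((q:ℝ) * a n + a s + K * (q:ℝ) * GG ((q+1) * n + s)) + K * GG ((q+1) * n + s) := by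
          linarith [this]
      _ = ((q:ℕ)+1 : ℝ) * a n + a s + K * ((q:ℕ)+1 : ℝ) * GG ((q+1) * n + s) := by ring
      _ = ((q+1 : ℕ) : ℝ) * a n + a s + K * ((q+1 : ℕ) : ℝ) * GG ((q+1) * n + s) := by push_cast; ring

theorem blocks_bound (hm : 2 ≤ m) (hK : 0 < K)
    (hsub : ∀ p q, m ≤ p → m ≤ q → a (p + q) ≤ a p + a q + K * GG (p + q))
    (C0 : ℝ) (hC0 : ∀ s, m ≤ s → s ≤ 2 * m → a s / s ≤ C0) :
    ∀ k : ℕ, ∀ s : ℕ, m ≤ s → s ≤ 2 ^ (k+1) * m →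
      a s / s ≤ C0 + EE K m * ∑ i ∈ Finset.range k, rr ^ i := by
  have hE0 : 0 ≤ EE K m := EE_nonneg hK.le (by omega)
  intro k
  induction k with
  | zero =>
    intro s h1 h2
    simpa using hC0 s h1 (by simpa using h2)
  | succ k ih =>
    intro s h1 h2
    by_cases hcase : s ≤ 2 ^ (k+1) * m
    · have := ih s h1 hcase
      have hterm : (0:ℝ) ≤ EE K m * rr ^ k := mul_nonneg hE0 (pow_nonneg rr_pos.le k)
      rw [Finset.sum_range_succ]
      nlinarith [this]
    · push_neg at hcase
      -- split s = u + v
      set u := s / 2 with hu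
      set v := s - s / 2 with hv
      have hW : 0 < 2 ^ k * m := Nat.mul_pos (Nat.pow_pos (n := k) (by norm_num)) (by omega)
      have hk1 : 2 ^ (k+1) * m = 2 * (2 ^ k * m) := by ring
      have hk2 : 2 ^ (k+1+1) * m = 4 * (2 ^ k * m) := by ring
      rw [hk1] at hcase
      rw [hk2] at h2
      have hWm : m ≤ 2 ^ k * m := Nat.le_mul_of_pos_left m (Nat.pow_pos (n := k) (by norm_num))
      have hmu : m ≤ u := by omega
      have huv : u + v = s := by omega
      have hmv : m ≤ v := by omega
      have huB : u ≤ 2 ^ (k+1) * m := by rw [hk1]; omega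
      have hvB : v ≤ 2 ^ (k+1) * m := by rw [hk1]; omega
      have ihu := ih u hmu huB
      have ihv := ih v hmv hvB
      have hstep := hsub u v hmu hmv
      rw [huv] at hstep
      have hu0 : (0:ℝ) < (u:ℝ) := by exact_mod_cast (by omega : 0 < u)
      have hv0 : (0:ℝ) < (v:ℝ) := by exact_mod_cast (by omega : 0 < v)
      have hs0 : (0:ℝ) < (s:ℝ) := by exact_mod_cast (by omega : 0 < s)
      set Q := C0 + EE K m * ∑ i ∈ Finset.range k, rr ^ i with hQ
      have hau : a u ≤ Q * u := (div_le_iff₀ hu0).mp ihu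
      have hav : a v ≤ Q * v := (div_le_iff₀ hv0).mp ihv
      have hcastuv : (u:ℝ) + (v:ℝ) = (s:ℝ) := by exact_mod_cast congrArg (Nat.cast (R := ℝ)) huv
      have hGs : K * GG s / s ≤ EE K m * rr ^ (k+1) := by
        apply step_bound hK.le hm
        · omega
        · omega
      have hrrk : EE K m * rr ^ (k+1) ≤ EE K m * rr ^ k :=
        mul_le_mul_of_nonneg_left
          (pow_le_pow_of_le_one rr_pos.le rr_lt_one.le (Nat.le_succ k)) hE0
      have has : a s ≤ Q * s + K * GG s := by
        calc a s ≤ a u + a v + K * GG s := hstep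
          _ ≤ Q * u + Q * v + K * GG s := by linarith
          _ = Q * s + K * GG s := by rw [← hcastuv]; ring
      have hfin : a s / s ≤ Q + K * GG s / s := by
        rw [div_le_iff₀ hs0]
        have : (Q + K * GG s / s) * s = Q * s + K * GG s := by
          field_simp
        rw [this]; exact has
      rw [Finset.sum_range_succ]
      calc a s / s ≤ Q + K * GG s / s := hfin
        _ ≤ Q + EE K m * rr ^ k := by linarith [hGs.trans hrrk]
        _ = C0 + EE K m * (∑ i ∈ Finset.range k, rr ^ i + rr ^ k) := by rw [hQ]; ring
end Aux
lemma log_div_rpow_tendsto :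
    Tendsto (fun x : ℝ => Real.log x / x ^ ((1:ℝ)/4)) atTop (nhds 0) :=
  (isLittleO_log_rpow_atTop (by norm_num : (0:ℝ) < 1/4)).tendsto_div_nhds_zero

lemma EE_tendsto (K : ℝ) : Tendsto (fun n : ℕ => EE K n) atTop (nhds 0) := by
  have hl2 : 0 < Real.log 2 := Real.log_pos one_lt_two
  have h1 : Tendsto (fun x : ℝ => K * (8 / Real.log 2 + 2) * x ^ (-((1:ℝ)/4)))
      atTop (nhds 0) := by
    have := (tendsto_rpow_neg_atTop (by norm_num : (0:ℝ) < 1/4)).const_mul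
      (K * (8 / Real.log 2 + 2))
    simpa using this
  have h2 : Tendsto (fun x : ℝ => (K / Real.log 2) * (Real.log x / x ^ ((1:ℝ)/4)))
      atTop (nhds 0) := by
    have := log_div_rpow_tendsto.const_mul (K / Real.log 2)
    simpa using this
  have h3 : Tendsto (fun x : ℝ => K * (8 / Real.log 2 + 2) * x ^ (-((1:ℝ)/4))
      + (K / Real.log 2) * (Real.log x / x ^ ((1:ℝ)/4))) atTop (nhds 0) := by
    simpa using h1.add h2
  have h4 : Tendsto (fun x : ℝ => K * (8 / Real.log 2 + 2 + Real.logb 2 x) / x ^ ((1:ℝ)/4))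
      atTop (nhds 0) := by
    apply h3.congr'
    filter_upwards [eventually_gt_atTop (0:ℝ)] with x hx
    rw [Real.logb, Real.rpow_neg hx.le]
    field_simp
  have := h4.comp (tendsto_natCast_atTop_atTop (R := ℝ))
  exact this

lemma GG_div_tendsto : Tendsto (fun N : ℕ => GG N / N) atTop (nhds 0) := by
  have hl2 : 0 < Real.log 2 := Real.log_pos one_lt_two
  have h2 : Tendsto (fun x : ℝ => (1 / Real.log 2) * (Real.log x / x ^ ((1:ℝ)/4)))
      atTop (nhds 0) := by
    have := log_div_rpow_tendsto.const_mul (1 / Real.log 2)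
    simpa using this
  have h4 : Tendsto (fun x : ℝ => x ^ ((3:ℝ)/4) * Real.logb 2 x / x) atTop (nhds 0) := by
    apply h2.congr'
    filter_upwards [eventually_gt_atTop (0:ℝ)] with x hx
    rw [Real.logb]
    rw [show ((3:ℝ)/4) = 1 - (1:ℝ)/4 by norm_num, Real.rpow_sub hx, Real.rpow_one]
    have hx4 : (0:ℝ) < x ^ ((1:ℝ)/4) := Real.rpow_pos_of_pos hx _
    field_simp
  exact h4.comp (tendsto_natCast_atTop_atTop (R := ℝ))
set_option maxHeartbeats 2000000 in
theorem aux_main (a : ℕ → ℝ) (K : ℝ) (m : ℕ) (hm : 2 ≤ m) (hK : 0 < K)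
    (ha0 : ∀ n, m ≤ n → 0 ≤ a n)
    (hsub : ∀ p q, m ≤ p → m ≤ q → a (p + q) ≤ a p + a q + K * GG (p + q)) :
    ∃ L : ℝ, 0 ≤ L ∧ Tendsto (fun n : ℕ => a n / n) atTop (nhds L) := by
  set b : ℕ → ℝ := fun n => a n / n with hbdef
  have hmne : (Finset.Icc m (2*m)).Nonempty := ⟨m, Finset.mem_Icc.mpr ⟨le_refl _, by omega⟩⟩
  set C0 := (Finset.Icc m (2*m)).sup' hmne b with hC0def
  have hC0 : ∀ s, m ≤ s → s ≤ 2*m → b s ≤ C0 := fun s h1 h2 =>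
    Finset.le_sup' b (Finset.mem_Icc.mpr ⟨h1, h2⟩)
  clear_value C0
  have hE0 : 0 ≤ EE K m := EE_nonneg hK.le (by omega)
  have hIr : 0 ≤ 1/(1-rr) := le_of_lt (div_pos one_pos one_sub_rr_pos)
  set B := C0 + EE K m * (1/(1-rr)) with hBdef
  have hB : ∀ s, m ≤ s → b s ≤ B := by
    intro s hs
    have h2 : s ≤ 2^(s+1) * m := by
      calc s ≤ 2^s := (Nat.lt_two_pow_self (n := s)).le
        _ = 2^s * 1 := by ring
        _ ≤ 2^(s+1)*m := Nat.mul_le_mul (Nat.pow_le_pow_right (by norm_num) (Nat.le_succ s)) (by omega)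
    have hblk := blocks_bound hm hK hsub C0 hC0 s s hs h2
    have hgeom : EE K m * ∑ i ∈ Finset.range s, rr ^ i ≤ EE K m * (1/(1-rr)) :=
      mul_le_mul_of_nonneg_left (geom_bound s) hE0
    calc b s ≤ C0 + EE K m * ∑ i ∈ Finset.range s, rr ^ i := hblk
      _ ≤ B := by rw [hBdef]; linarith
  clear_value B
  have hb0 : ∀ s, m ≤ s → 0 ≤ b s := fun s hs => div_nonneg (ha0 s hs) (Nat.cast_nonneg s)
  have hbddB : IsBoundedUnder (· ≤ ·) atTop b :=
    isBoundedUnder_of_eventually_le (eventually_atTop.mpr ⟨m, hB⟩)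
  have hbdd0 : IsBoundedUnder (· ≥ ·) atTop b :=
    isBoundedUnder_of_eventually_ge (eventually_atTop.mpr ⟨m, hb0⟩)
  have hcob_ge : IsCoboundedUnder (· ≥ ·) atTop b := hbddB.isCoboundedUnder_ge
  have hcob_le : IsCoboundedUnder (· ≤ ·) atTop b := hbdd0.isCoboundedUnder_le
  set L := liminf b atTop with hLdef
  have hL0 : 0 ≤ L := le_liminf_of_le hcob_ge (eventually_atTop.mpr ⟨m, hb0⟩)
  have key : ∀ ε : ℝ, 0 < ε → ε ≤ 1 → ∀ᶠ N in atTop, b N ≤ L + ε := by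
    intro ε hε hε1
    set B' := B + 1 with hB'def
    clear_value B'
    have hC0nn : 0 ≤ C0 := le_trans (hb0 m le_rfl) (hC0 m le_rfl (by omega))
    have hBnn : 0 ≤ B := by rw [hBdef]; have := mul_nonneg hE0 hIr; linarith
    have hB'1 : 1 ≤ B' := by rw [hB'def]; linarith
    have hB'0 : 0 < B' := by linarith
    have hB'ne : B' ≠ 0 := ne_of_gt hB'0
    have hεne : ε ≠ 0 := ne_of_gt hε
    have hKne : K ≠ 0 := ne_of_gt hK
    -- pick a good base point n₁
    have hfreq : ∃ᶠ n in atTop, b n < L + ε/4 :=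
      frequently_lt_of_liminf_lt hcob_ge (by linarith)
    have hev : ∀ᶠ n : ℕ in atTop, m ≤ n ∧ EE K n * (1/(1-rr)) ≤ ε/4 := by
      have h1 : ∀ᶠ n : ℕ in atTop, m ≤ n := eventually_atTop.mpr ⟨m, fun n h => h⟩
      have h2 : ∀ᶠ n : ℕ in atTop, EE K n * (1/(1-rr)) ≤ ε/4 := by
        have ht : Tendsto (fun n : ℕ => EE K n * (1/(1-rr))) atTop (nhds 0) := by
          simpa using (EE_tendsto K).mul_const (1/(1-rr))
        exact (ht.eventually_lt_const (by linarith)).mono fun n h => h.le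
      exact h1.and h2
    obtain ⟨n₁, hn₁good, hn₁m, hn₁Φ⟩ := (hfreq.and_eventually hev).exists
    have hn₁2 : 2 ≤ n₁ := hm.trans hn₁m
    have hn₁0 : 0 < n₁ := by omega
    have hgoodk : ∀ k, b (2^k * n₁) ≤ L + ε/2 := by
      intro k
      have hch := chain_doubling hm hK hsub hn₁m k
      have hEn1 : 0 ≤ EE K n₁ := EE_nonneg hK.le (by omega)
      have hge : EE K n₁ * ∑ i ∈ Finset.range k, rr ^ i ≤ EE K n₁ * (1/(1-rr)) :=
        mul_le_mul_of_nonneg_left (geom_bound k) hEn1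
      calc b (2^k*n₁) ≤ b n₁ + EE K n₁ * ∑ i ∈ Finset.range k, rr ^ i := hch
        _ ≤ L + ε/2 := by linarith [hn₁good.le, hn₁Φ]
    -- eventual conditions on N
    have hN1 : ∀ᶠ N : ℕ in atTop, (8*K/ε) * GG N ≤ ε * N / (24 * B') := by
      have hδ : (0:ℝ) < ε^2/(192*K*B') := by positivity
      have h := GG_div_tendsto.eventually_lt_const hδ
      filter_upwards [h, eventually_ge_atTop 1] with N hlt hN1
      have hN0 : (0:ℝ) < (N:ℝ) := by exact_mod_cast hN1
      have hGN : GG N ≤ (ε^2/(192*K*B')) * N := by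
        have := (div_le_iff₀ hN0).mp hlt.le
        linarith
      have h8 : (0:ℝ) ≤ 8*K/ε := by positivity
      calc (8*K/ε) * GG N ≤ (8*K/ε) * ((ε^2/(192*K*B')) * N) :=
            mul_le_mul_of_nonneg_left hGN h8
        _ = ε * N / (24 * B') := by field_simp; ring
    have hN2 : ∀ᶠ N : ℕ in atTop, ((n₁:ℝ) + 2) ≤ ε * N / (24 * B') := by
      have ht : Tendsto (fun N : ℕ => ε * N / (24 * B')) atTop atTop := by
        have h0 : Tendsto (fun N : ℕ => (N:ℝ)) atTop atTop := tendsto_natCast_atTop_atTop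
        have := (h0.const_mul_atTop hε).atTop_div_const (by positivity : (0:ℝ) < 24 * B')
        simpa [mul_div_assoc] using this
      exact ht.eventually_ge_atTop _
    filter_upwards [hN1, hN2, eventually_ge_atTop 1] with N h1 h2 hNge1
    have hN0 : (0:ℝ) < (N:ℝ) := by exact_mod_cast hNge1
    -- define M, k, n
    set M := ⌊ε * N / (12*B')⌋₊ with hMdef
    have hval0 : (0:ℝ) ≤ ε*N/(12*B') := by positivity
    have hMub : (M:ℝ) ≤ ε*N/(12*B') := Nat.floor_le hval0
    have hMlb : ε*N/(12*B') - 1 < (M:ℝ) := by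
      linarith [Nat.lt_floor_add_one (ε*N/(12*B'))]
    have h1224 : ε*N/(12*B') = ε*N/(24*B') + ε*N/(24*B') := by ring
    have hn₁M : n₁ ≤ M := by
      apply Nat.le_floor
      have h24 : (0:ℝ) ≤ ε * N / (24 * B') := by positivity
      push_cast
      linarith
    clear_value M
    set k := Nat.log 2 (M / n₁) with hkdef
    set n := 2^k * n₁ with hndef
    have hgood : b n ≤ L + ε/2 := hgoodk k
    have hMn₁pos : 0 < M / n₁ := Nat.div_pos hn₁M hn₁0
    have hnM : n ≤ M := by
      calc n = 2^k*n₁ := rfl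
        _ ≤ (M/n₁)*n₁ := Nat.mul_le_mul_right n₁ (Nat.pow_log_le_self 2 (by omega))
        _ ≤ M := Nat.div_mul_le_self M n₁
    have hMlt : M < 2*n := by
      have hlog := Nat.lt_pow_succ_log_self (by norm_num : 1 < 2) (M / n₁)
      have e3 : M/n₁ + 1 ≤ 2^(k+1) := hlog
      calc M = n₁*(M/n₁) + M % n₁ := (Nat.div_add_mod M n₁).symm
        _ < n₁*(M/n₁) + n₁ := Nat.add_lt_add_left (Nat.mod_lt _ hn₁0) _
        _ = (M/n₁ + 1) * n₁ := by ring
        _ ≤ 2^(k+1) * n₁ := Nat.mul_le_mul_right n₁ e3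
        _ = 2*n := by rw [hndef]; ring
    have hnm : m ≤ n := le_trans hn₁m (Nat.le_mul_of_pos_left n₁ (Nat.pow_pos (n := k) (by norm_num)))
    have hn0 : 0 < n := by omega
    have hnR : (0:ℝ) < (n:ℝ) := by exact_mod_cast hn0
    have hnMR : (n:ℝ) ≤ (M:ℝ) := by exact_mod_cast hnM
    have hMltR : (M:ℝ) < 2*(n:ℝ) := by exact_mod_cast hMlt
    clear_value n
    clear_value k
    -- 2n ≤ N
    have hMN12 : (M:ℝ) ≤ (N:ℝ)/12 := by
      apply hMub.trans
      rw [div_le_div_iff₀ (by positivity) (by norm_num)]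
      nlinarith
    have h2nN : 2*n ≤ N := by
      have : (2*(n:ℝ)) ≤ (N:ℝ) := by push_cast; linarith
      exact_mod_cast this
    -- lower bound for n
    have hGG0 : 0 ≤ GG N := GG_nonneg hNge1
    have hn₁R : (1:ℝ) ≤ (n₁:ℝ) := by exact_mod_cast hn₁0
    have hnlb : 4*K*GG N/ε ≤ (n:ℝ) := by
      have : (8*K/ε)*GG N + ((n₁:ℝ)+2) ≤ ε*N/(12*B') := by rw [h1224]; linarith
      have h4 : 4*K*GG N/ε = ((8*K/ε)*GG N)/2 := by field_simp; ring
      rw [h4]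
      linarith
    -- decomposition N = q*n + s
    have hrem : (N - 2*n)/n * n + (N - 2*n) % n = N - 2*n := by
      rw [mul_comm]; exact Nat.div_add_mod (N - 2*n) n
    set q := (N - 2*n)/n with hqdef
    set s := 2*n + (N - 2*n) % n with hsdef
    have hmodlt : (N - 2*n) % n < n := Nat.mod_lt _ hn0
    have hsm : m ≤ s := le_trans hnm (le_trans (by omega : n ≤ 2*n) (Nat.le_add_right _ _))
    have hNqs : N = q*n + s := by
      have e : q*n + s = (q * n + (N - 2*n) % n) + 2*n := by rw [hsdef]; ring
      rw [e, hqdef, hrem]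
      omega
    have hs3n : s < 3*n := by
      calc s = 2*n + (N - 2*n) % n := rfl
        _ < 2*n + n := Nat.add_lt_add_left hmodlt _
        _ = 3*n := by ring
    clear_value q
    clear_value s
    have hiter := iterate_add hm hK hsub hnm hsm q
    rw [← hNqs] at hiter
    -- bound the three terms
    have hqnN : (q:ℝ)*(n:ℝ) ≤ (N:ℝ) := by
      have : q*n ≤ N := by omega
      exact_mod_cast this
    have hbn0 : 0 ≤ b n := hb0 n hnm
    have han : a n = (n:ℝ) * b n := by
      rw [hbdef]; field_simp
    have hterm1 : (q:ℝ) * a n ≤ (N:ℝ)*(L + ε/2) := by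
      have e : (q:ℝ) * a n = ((q:ℝ)*(n:ℝ)) * b n := by rw [han]; ring
      rw [e]
      have hLε : 0 ≤ L + ε/2 := by linarith
      calc ((q:ℝ)*(n:ℝ)) * b n ≤ (N:ℝ) * b n :=
            mul_le_mul_of_nonneg_right hqnN hbn0
        _ ≤ (N:ℝ)*(L + ε/2) := mul_le_mul_of_nonneg_left hgood hN0.le
    have hbs : b s ≤ B := hB s hsm
    have hbs0 : 0 ≤ b s := hb0 s hsm
    have hsR : (0:ℝ) < (s:ℝ) := by exact_mod_cast (show 0 < s by omega)
    have has' : a s = (s:ℝ) * b s := by rw [hbdef]; field_simp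
    have hs3nR : (s:ℝ) ≤ 3*(n:ℝ) := by exact_mod_cast hs3n.le
    have hterm2 : a s ≤ (N:ℝ)*(ε/4) := by
      have hBB' : B ≤ B' := by rw [hB'def]; linarith
      calc a s = (s:ℝ) * b s := has'
        _ ≤ (s:ℝ) * B' := mul_le_mul_of_nonneg_left (hbs.trans hBB') hsR.le
        _ ≤ (3*(n:ℝ)) * B' := mul_le_mul_of_nonneg_right hs3nR (by linarith)
        _ ≤ (3*(M:ℝ)) * B' := mul_le_mul_of_nonneg_right (by linarith) (by linarith)
        _ ≤ (3*(ε*N/(12*B'))) * B' := mul_le_mul_of_nonneg_right (by linarith) (by linarith)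
        _ = (N:ℝ)*(ε/4) := by field_simp; ring
    have hterm3 : K*(q:ℝ)*GG N ≤ (N:ℝ)*(ε/4) := by
      have hKG : K * GG N ≤ (n:ℝ)*(ε/4) := by
        rw [div_le_iff₀ hε] at hnlb
        nlinarith
      have hq0 : (0:ℝ) ≤ (q:ℝ) := Nat.cast_nonneg q
      calc K*(q:ℝ)*GG N = (q:ℝ)*(K*GG N) := by ring
        _ ≤ (q:ℝ)*((n:ℝ)*(ε/4)) := mul_le_mul_of_nonneg_left hKG hq0
        _ = ((q:ℝ)*(n:ℝ))*(ε/4) := by ring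
        _ ≤ (N:ℝ)*(ε/4) := mul_le_mul_of_nonneg_right hqnN (by linarith)
    have hfinal : a N ≤ (N:ℝ)*(L + ε) := by
      calc a N ≤ (q:ℝ) * a n + a s + K*(q:ℝ)*GG N := by
            have := hiter; push_cast at this ⊢; linarith
        _ ≤ (N:ℝ)*(L + ε/2) + (N:ℝ)*(ε/4) + (N:ℝ)*(ε/4) := by linarith
        _ = (N:ℝ)*(L + ε) := by ring
    show b N ≤ L + ε
    rw [hbdef]
    rw [div_le_iff₀ hN0]
    linarith [hfinal]
  -- conclude
  have hlimsup_le : limsup b atTop ≤ L := by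
    apply le_of_forall_pos_le_add
    intro ε hε
    have hε' : 0 < min ε 1 := lt_min hε one_pos
    have hstep := limsup_le_of_le hcob_le ((key (min ε 1) hε' (min_le_right _ _)).mono
      (fun N h => h))
    have : L + min ε 1 ≤ L + ε := by linarith [min_le_left ε 1]
    linarith
  have hliminf_le : L ≤ limsup b atTop := liminf_le_limsup hbddB hbdd0
  exact ⟨L, hL0, tendsto_of_liminf_eq_limsup rfl (le_antisymm hlimsup_le hliminf_le) hbddB hbdd0⟩
/-- Generalized subadditive limit theorem.  If `π : ℕ → [0,1]` satisfies
`π (m+n) ≥ π m · π n · c ^ ((m+n)^{3/4} · log₂ (m+n))` for all sufficiently large `m, n`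
(where `0 < c < 1`) and `π n > 0` for all large `n`, then `lim_{n→∞} −(1/n) log π n`
exists in `[0, ∞]` (as an extended real number). -/
theorem neg_log_div_tendsto_of_approx_supermultiplicative
    (π : ℕ → ℝ) (c : ℝ) (hc0 : 0 < c) (hc1 : c < 1)
    (hπ : ∀ n, 0 ≤ π n ∧ π n ≤ 1)
    (hpos : ∃ n₁ : ℕ, ∀ n, n₁ ≤ n → 0 < π n)
    (hsub : ∃ n₀ : ℕ, ∀ m n : ℕ, n₀ ≤ m → n₀ ≤ n →
      π m * π n * c ^ (((m + n : ℕ) : ℝ) ^ ((3 : ℝ) / 4) * Real.logb 2 ((m + n : ℕ) : ℝ))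
        ≤ π (m + n)) :
    ∃ L : EReal, 0 ≤ L ∧
      Tendsto (fun n : ℕ => ((-(1 / (n : ℝ)) * Real.log (π n) : ℝ) : EReal)) atTop (nhds L) := by
  obtain ⟨n₁, hn₁⟩ := hpos
  obtain ⟨n₀, hn₀⟩ := hsub
  set K : ℝ := -Real.log c with hKdef
  have hK : 0 < K := by
    have := Real.log_neg hc0 hc1
    rw [hKdef]; linarith
  set a : ℕ → ℝ := fun n => -Real.log (π n) with hadef
  set m : ℕ := max (max n₀ n₁) 2 with hmdef
  have hm2 : 2 ≤ m := le_max_right _ _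
  have hmn₀ : n₀ ≤ m := le_trans (le_max_left _ _) (le_max_left _ _)
  have hmn₁ : n₁ ≤ m := le_trans (le_max_right _ _) (le_max_left _ _)
  have ha0 : ∀ n, m ≤ n → 0 ≤ a n := by
    intro n hn
    have hp : 0 < π n := hn₁ n (le_trans hmn₁ hn)
    have h1 : π n ≤ 1 := (hπ n).2
    have := Real.log_nonpos hp.le h1
    rw [hadef]; simpa using this
  have hsub' : ∀ p q, m ≤ p → m ≤ q → a (p + q) ≤ a p + a q + K * GG (p + q) := by
    intro p q hp hq
    have hπp : 0 < π p := hn₁ p (le_trans hmn₁ hp)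
    have hπq : 0 < π q := hn₁ q (le_trans hmn₁ hq)
    have hπpq : 0 < π (p + q) := hn₁ (p + q) (le_trans (le_trans hmn₁ hp) (Nat.le_add_right _ _))
    have hcpow : 0 < c ^ (((p + q : ℕ) : ℝ) ^ ((3 : ℝ) / 4) * Real.logb 2 ((p + q : ℕ) : ℝ)) :=
      Real.rpow_pos_of_pos hc0 _
    have hineq := hn₀ p q (le_trans hmn₀ hp) (le_trans hmn₀ hq)
    have hprod : 0 < π p * π q * c ^ (((p + q : ℕ) : ℝ) ^ ((3 : ℝ) / 4)
        * Real.logb 2 ((p + q : ℕ) : ℝ)) := by positivity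
    have hlog := Real.log_le_log hprod hineq
    rw [Real.log_mul (by positivity) (ne_of_gt hcpow),
      Real.log_mul (ne_of_gt hπp) (ne_of_gt hπq),
      Real.log_rpow hc0] at hlog
    have hGGeq : GG (p + q) = ((p + q : ℕ) : ℝ) ^ ((3 : ℝ) / 4)
        * Real.logb 2 ((p + q : ℕ) : ℝ) := rfl
    rw [hadef, hKdef, hGGeq]
    simp only
    nlinarith [hlog]
  obtain ⟨L, hL0, hLtendsto⟩ := aux_main a K m hm2 hK ha0 hsub'
  refine ⟨(L : EReal), ?_, ?_⟩
  · exact_mod_cast hL0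
  · have heq : (fun n : ℕ => (-(1 / (n : ℝ)) * Real.log (π n) : ℝ)) = fun n : ℕ => a n / n := by
      funext n
      rw [hadef]
      simp only
      ring
    rw [show (fun n : ℕ => ((-(1 / (n : ℝ)) * Real.log (π n) : ℝ) : EReal))
        = fun n : ℕ => ((a n / n : ℝ) : EReal) by funext n; rw [congrFun heq n]]
    exact EReal.tendsto_coe.mpr hLtendsto
end

section
/- Let G be a Cayley graph of a finitely generated group with degree d, with at least cubic growth in the sense that there is α > 0 such that the ball of radius r around the identity contains at least α r³ vertices for all r ≥ 1. Then for all sufficiently large finite connected vertex sets A and B containing the identity, with |A| = n and |B| = m, there exists an automorphism γ of G (given by right multiplication by a group element) such that γA is disjoint from B and dist(γA, B) ≤ (n+m)^{3/4}. -/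
open Set

/-- The (left-)Cayley graph of a group with respect to a generating set `S`
(edges `{u, su}` for `s ∈ S`; `fromRel` symmetrizes, which is harmless for symmetric `S`). -/
def cayleyGraph (G : Type*) [Group G] (S : Set G) : SimpleGraph G :=
  SimpleGraph.fromRel (fun u v => ∃ s ∈ S, v = s * u)

/-- In a Cayley graph of degree `d` with at least cubic growth, any two
sufficiently large finite connected sets `A`, `B` containing the identity (of sizes `n`, `m`)
admit a right-translate `A·g` of `A` disjoint from `B` with
`dist(A·g, B) ≤ (n+m)^{3/4}`. -/
theorem exists_disjoint_close_translate
    {G : Type*} [Group G] (S : Set G) (hSfin : S.Finite) (hSsym : ∀ s ∈ S, s⁻¹ ∈ S)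
    (hconn : (cayleyGraph G S).Connected)
    (d : ℕ) (hd : S.ncard = d)
    (α : ℝ) (hα : 0 < α)
    (hcubic : ∀ ρ : ℕ, 1 ≤ ρ →
      α * (ρ : ℝ) ^ 3 ≤ ({g : G | (cayleyGraph G S).dist 1 g ≤ ρ}).ncard) :
    ∃ n₀ : ℕ, ∀ A B : Set G, A.Finite → B.Finite → (1 : G) ∈ A → (1 : G) ∈ B →
      ((cayleyGraph G S).induce A).Connected → ((cayleyGraph G S).induce B).Connected →
      n₀ ≤ A.ncard + B.ncard →
      ∃ g : G, Disjoint ((fun a => a * g) '' A) B ∧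
        ∃ a ∈ A, ∃ b ∈ B,
          ((cayleyGraph G S).dist (a * g) b : ℝ)
            ≤ ((A.ncard + B.ncard : ℕ) : ℝ) ^ ((3 : ℝ) / 4) := by
  refine ⟨max 3 (⌈(8 / α) ^ 4⌉₊ + 1), ?_⟩
  intro A B hAfin hBfin hA1 hB1 _ _ hN
  set N : ℕ := A.ncard + B.ncard with hNdef
  have hN3 : 3 ≤ N := le_trans (le_max_left _ _) hN
  have hNpos : (0 : ℝ) < N := by positivity
  have hcα : (8 / α) ^ 4 < (N : ℝ) :=
    Nat.lt_of_ceil_lt (Nat.lt_of_succ_le (le_trans (le_max_right _ _) hN))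
  set x : ℝ := (N : ℝ) ^ ((3 : ℝ) / 4) with hxdef
  have hxpos : 0 < x := Real.rpow_pos_of_pos hNpos _
  have hx2 : (2 : ℝ) ≤ x := by
    have h1 : ((3 : ℕ) : ℝ) ^ ((3 : ℝ) / 4) ≤ x :=
      Real.rpow_le_rpow (by norm_num) (by exact_mod_cast hN3) (by norm_num)
    have h3 : (2 : ℝ) ≤ ((3 : ℕ) : ℝ) ^ ((3 : ℝ) / 4) := by
      set y : ℝ := ((3 : ℕ) : ℝ) ^ ((3 : ℝ) / 4) with hy
      have hy0 : 0 ≤ y := Real.rpow_nonneg (by norm_num) _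
      have hy4 : y ^ (4 : ℕ) = 27 := by
        rw [hy, ← Real.rpow_natCast (((3:ℕ):ℝ) ^ ((3:ℝ)/4)) 4,
          ← Real.rpow_mul (by norm_num)]
        norm_num
      by_contra h
      push_neg at h
      have h2 : y ^ 2 < 4 := by nlinarith
      have h4 : y ^ 4 < 16 := by nlinarith
      linarith
    linarith
  set R : ℕ := ⌊x⌋₊ with hRdef
  have hR1 : 1 ≤ R := Nat.le_floor (by push_cast; linarith)
  have hRle : (R : ℝ) ≤ x := Nat.floor_le hxpos.le
  have hRge : x / 2 ≤ (R : ℝ) := by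
    have := Nat.sub_one_lt_floor x
    linarith
  -- key inequality : N^2 < α R^3
  have hx3 : x ^ 3 = (N : ℝ) ^ 2 * (N : ℝ) ^ ((1 : ℝ) / 4) := by
    rw [hxdef, ← Real.rpow_natCast ((N:ℝ) ^ ((3:ℝ)/4)) 3, ← Real.rpow_mul hNpos.le,
      show ((N : ℝ) ^ 2 : ℝ) = (N : ℝ) ^ ((2 : ℕ) : ℝ) by rw [Real.rpow_natCast],
      ← Real.rpow_add hNpos]
    norm_num
  have hroot : 8 / α < (N : ℝ) ^ ((1 : ℝ) / 4) := by
    have h0 : (0 : ℝ) ≤ 8 / α := by positivity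
    have := Real.rpow_lt_rpow (by positivity) hcα (by norm_num : (0:ℝ) < 1/4)
    rwa [← Real.rpow_natCast (8/α) 4, ← Real.rpow_mul h0,
      show ((4:ℕ):ℝ) * (1/4) = 1 by norm_num, Real.rpow_one] at this
  have hkey : (N : ℝ) ^ 2 < α * (R : ℝ) ^ 3 := by
    have h1 : α * (x / 2) ^ 3 ≤ α * (R : ℝ) ^ 3 :=
      mul_le_mul_of_nonneg_left (pow_le_pow_left₀ (by positivity) hRge 3) hα.le
    have h2 : (N : ℝ) ^ 2 < α * (x / 2) ^ 3 := by
      have hxx : (x / 2) ^ 3 = x ^ 3 / 8 := by ring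
      rw [hxx, hx3]
      have hN2 : (0 : ℝ) < (N:ℝ) ^ 2 := by positivity
      rw [div_lt_iff₀ hα] at hroot
      nlinarith [mul_lt_mul_of_pos_left hroot hN2]
    linarith
  -- the ball and the bad set
  have hball := hcubic R hR1
  set Ball : Set G := {g : G | (cayleyGraph G S).dist 1 g ≤ R} with hBalldef
  set Bad : Set G := (fun p : G × G => p.1⁻¹ * p.2) '' (A ×ˢ B) with hBaddef
  have hBadfin : Bad.Finite := (hAfin.prod hBfin).image _
  have hBadcard : (Bad.ncard : ℝ) ≤ (N : ℝ) ^ 2 := by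
    have h1 : Bad.ncard ≤ (A ×ˢ B).ncard := Set.ncard_image_le (hAfin.prod hBfin)
    have h2 : (A ×ˢ B).ncard = A.ncard * B.ncard := by
      rw [← Nat.card_coe_set_eq, ← Nat.card_coe_set_eq, ← Nat.card_coe_set_eq,
        Nat.card_congr (Equiv.Set.prod A B), Nat.card_prod]
    have h3 : A.ncard * B.ncard ≤ N * N := by
      apply Nat.mul_le_mul <;> omega
    have : (Bad.ncard : ℝ) ≤ (N * N : ℕ) := by exact_mod_cast h1.trans (h2 ▸ h3)
    push_cast at this
    nlinarith
  have hnotsub : ¬ Ball ⊆ Bad := by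
    intro hsub
    have := Set.ncard_le_ncard hsub hBadfin
    have hb : (Ball.ncard : ℝ) ≤ (Bad.ncard : ℝ) := by exact_mod_cast this
    linarith
  obtain ⟨g, hgball, hgbad⟩ := Set.not_subset.mp hnotsub
  refine ⟨g, ?_, 1, hA1, 1, hB1, ?_⟩
  · rw [Set.disjoint_left]
    rintro y ⟨a, ha, rfl⟩ hyB
    exact hgbad ⟨(a, a * g), Set.mem_prod.mpr ⟨ha, hyB⟩, by group⟩
  · rw [one_mul, SimpleGraph.dist_comm]
    exact le_trans (by exact_mod_cast hgball) hRle
end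

section
/- Let G be a locally finite graph with maximum degree d and anchored Cheeger constant κ' = κ'(G, v₀) > 0 at a vertex v₀. For i.i.d. Bernoulli(p) bond percolation with p > 1/(1 + κ'), there exists γ(p) > 0 such that P_p(|C| = n) ≤ exp(−γ(p) n) for all n ≥ 1, where C is the open cluster of v₀. -/
open MeasureTheory ProbabilityTheory Set
open scoped ENNReal

/-- The subgraph of open edges of `G` in the bond configuration `ω`. -/
def openSubgraph {V : Type*} (G : SimpleGraph V) (ω : Sym2 V → Bool) : SimpleGraph V :=
  G.deleteEdges {e | ω e = false}

/-- The open cluster of the vertex `v` in the configuration `ω`. -/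
def percCluster {V : Type*} (G : SimpleGraph V) (ω : Sym2 V → Bool) (v : V) : Set V :=
  {u | (openSubgraph G ω).Reachable v u}

/-- `P` is i.i.d. Bernoulli(p) bond percolation on `G`: it is a probability measure on bond
configurations whose edge coordinates (over the edges of `G`) are independent and
Bernoulli(p)-distributed. -/
def IsBernoulliPercolation {V : Type*} (G : SimpleGraph V) (p : ℝ≥0∞) (hp : p ≤ 1)
    (P : Measure (Sym2 V → Bool)) : Prop :=
  IsProbabilityMeasure P ∧
  iIndepFun
    (fun (e : G.edgeSet) (ω : Sym2 V → Bool) => ω (e : Sym2 V)) P ∧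
  ∀ e : G.edgeSet, P.map (fun ω => ω (e : Sym2 V)) = (PMF.bernoulli p.toNNReal (by rw [← ENNReal.coe_le_coe, ENNReal.coe_toNNReal (ne_top_of_le_ne_top ENNReal.one_ne_top hp)]; simpa using hp)).toMeasure

/-- The external vertex boundary of a vertex set. -/
def extBoundary {V : Type*} (G : SimpleGraph V) (W : Set V) : Set V :=
  {u | u ∉ W ∧ ∃ v ∈ W, G.Adj u v}


section AuxExpDecay
open Finset


/-- Choice of comparison parameter `q`. -/
lemma choose_q (pr κ : ℝ) (hκ : 0 < κ) (hlt : 1 / (1 + κ) < pr) (hpr1 : pr ≤ 1) :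
    ∃ q : ℝ, 0 < q ∧ q < pr ∧ q < 1 ∧
      (pr / q) * ((1 - pr) / (1 - q)) ^ κ < 1 := by
  have h1κ : (0:ℝ) < 1 + κ := by linarith
  have hinv : 0 < 1 / (1 + κ) := by positivity
  have hpr0 : 0 < pr := lt_trans hinv hlt
  set q := (pr + 1 / (1 + κ)) / 2 with hq
  have hq0 : 0 < q := by positivity
  have hqpr : q < pr := by rw [hq]; linarith
  have hq1 : q < 1 := lt_of_lt_of_le hqpr hpr1
  have hqgt : 1 / (1 + κ) < q := by rw [hq]; linarith
  have h1q : 0 < 1 - q := by linarith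
  have hkey : 1 - q < κ * q := by
    rw [div_lt_iff₀ h1κ] at hqgt; nlinarith
  refine ⟨q, hq0, hqpr, hq1, ?_⟩
  rcases eq_or_lt_of_le hpr1 with h1 | hprlt1
  · subst h1
    have h0 : ((1:ℝ) - 1) / (1 - q) = 0 := by norm_num
    rw [h0, Real.zero_rpow (ne_of_gt hκ), mul_zero]
    norm_num
  · have h1p : 0 < 1 - pr := by linarith
    have hbase : 0 < (1 - pr) / (1 - q) := by positivity
    have hrpow : ((1 - pr) / (1 - q)) ^ κ = Real.exp (κ * Real.log ((1 - pr) / (1 - q))) := by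
      rw [Real.rpow_def_of_pos hbase, mul_comm]
    have hfrac : pr / q = Real.exp (Real.log (pr / q)) := by
      rw [Real.exp_log (by positivity)]
    rw [hrpow, hfrac, ← Real.exp_add]
    apply Real.exp_lt_one_iff.2
    have hlog1 : Real.log (pr / q) ≤ (pr - q) / q := by
      have h := Real.log_le_sub_one_of_pos (show (0:ℝ) < pr / q by positivity)
      have heq : pr / q - 1 = (pr - q) / q := by field_simp
      linarith [heq ▸ h]
    have hlog2 : Real.log ((1 - pr) / (1 - q)) ≤ -((pr - q) / (1 - q)) := by
      have h3 := Real.log_le_sub_one_of_pos hbase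
      have h4 : (1 - pr) / (1 - q) - 1 = -((pr - q) / (1 - q)) := by field_simp; ring
      linarith [h4 ▸ h3]
    have hprq : 0 < pr - q := by linarith
    have hfinal : (pr - q) / q - κ * ((pr - q) / (1 - q)) < 0 := by
      rw [sub_neg, mul_div_assoc', div_lt_div_iff₀ hq0 h1q]
      nlinarith
    have hmul := mul_le_mul_of_nonneg_left hlog2 (le_of_lt hκ)
    linarith


section Cube
variable {ι : Type*} [Fintype ι] [DecidableEq ι]

/-- Weight of a configuration: product over a designated coordinate set. -/
noncomputable def cubeW (a b : ℝ) (D : Finset ι) (σ : ι → Bool) : ℝ :=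
  ∏ i ∈ D, (if σ i then a else b)

lemma cubeW_nonneg {a b : ℝ} (ha : 0 ≤ a) (hb : 0 ≤ b) (D : Finset ι) (σ : ι → Bool) :
    0 ≤ cubeW a b D σ :=
  Finset.prod_nonneg fun i _ => by by_cases h : σ i <;> simp [h, ha, hb]

lemma cubeW_eq_prod_univ (a b : ℝ) (D : Finset ι) (σ : ι → Bool) :
    cubeW a b D σ = ∏ i, (if i ∈ D then (if σ i then a else b) else 1) := by
  rw [Finset.prod_ite_mem, Finset.univ_inter]; rfl

/-- Sum of a product over the full cube equals the product of coordinate sums. -/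
lemma sum_cube_prod (f : ι → Bool → ℝ) :
    ∑ σ : ι → Bool, ∏ i, f i (σ i) = ∏ i, (f i true + f i false) := by
  classical
  have := Finset.prod_univ_sum (fun _ : ι => (Finset.univ : Finset Bool)) f
  rw [Fintype.piFinset_univ] at this
  rw [← this]
  refine Finset.prod_congr rfl fun i _ => ?_
  simp [Fintype.sum_bool]

/-- Total mass of the full cube is 1 when `a + b = 1`. -/
lemma sum_cubeW_univ {a b : ℝ} (hab : a + b = 1) :
    ∑ σ : ι → Bool, cubeW a b (Finset.univ : Finset ι) σ = 1 := by
  unfold cubeW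
  rw [sum_cube_prod (f := fun i c => if c then a else b)]
  rw [Finset.prod_eq_one]
  intro i _
  simpa using hab

/-- Peeling off coordinates that are forced closed. -/
lemma cubeW_peel {a b : ℝ} {F D : Finset ι} (hFD : F ⊆ D) {σ : ι → Bool}
    (hσ : ∀ i ∈ F, σ i = false) :
    cubeW a b D σ = b ^ F.card * cubeW a b (D \ F) σ := by
  unfold cubeW
  rw [← Finset.prod_sdiff hFD, mul_comm]
  congr 1
  rw [Finset.prod_congr rfl (fun i hi => by rw [hσ i hi, if_neg Bool.false_ne_true]),
    Finset.prod_const]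

end Cube

section Thinning
variable {ι : Type*} [Fintype ι] [DecidableEq ι]

/-- Per-pair thinning kernel, incorporating the witness indicator. -/
noncomputable def thinK (R : Finset ι) (D : Finset ι) (r : ℝ) (σ : ι → Bool)
    (i : ι) (s : Bool) : ℝ :=
  if i ∈ R then (if s then r else 0)
  else if i ∈ D then (if σ i then (if s then r else 1 - r) else (if s then 0 else 1))
  else (if s = σ i then 1 else 0)

lemma thinK_nonneg {R D : Finset ι} {r : ℝ} (hr0 : 0 ≤ r) (hr1 : r ≤ 1)
    (σ : ι → Bool) (i : ι) (s : Bool) : 0 ≤ thinK R D r σ i s := by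
  unfold thinK
  split_ifs <;> first | linarith | norm_num

/-- The fundamental thinning inequality on the cube. -/
lemma thinning {a b a' b' r : ℝ} (ha : 0 ≤ a) (hb : 0 ≤ b) (hr0 : 0 ≤ r) (hr1 : r ≤ 1)
    (haa' : a * r = a') (hbb' : a * (1 - r) + b = b')
    (D : Finset ι) (T : Finset (ι → Bool)) (k : ℕ) (R : (ι → Bool) → Finset ι)
    (hRD : ∀ σ ∈ T, R σ ⊆ D)
    (hRopen : ∀ σ ∈ T, ∀ i ∈ R σ, σ i = true)
    (hRcard : ∀ σ ∈ T, (R σ).card ≤ k)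
    (hstab : ∀ σ ∈ T, ∀ ρ : ι → Bool,
      (∀ i ∈ D, ρ i = true → σ i = true) → (∀ i, i ∉ D → ρ i = σ i) →
      (∀ i ∈ R σ, ρ i = true) → ρ ∈ T) :
    r ^ k * ∑ σ ∈ T, cubeW a b D σ ≤ ∑ σ ∈ T, cubeW a' b' D σ := by
  classical
  have h1r : 0 ≤ 1 - r := by linarith
  -- (a) inner kernel sums
  have hKsum : ∀ σ ∈ T, (∑ ρ : ι → Bool, ∏ i, thinK (R σ) D r σ i (ρ i))
      = r ^ (R σ).card := by
    intro σ hσ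
    rw [sum_cube_prod (f := fun i s => thinK (R σ) D r σ i s)]
    have hcoord : ∀ i, thinK (R σ) D r σ i true + thinK (R σ) D r σ i false
        = if i ∈ R σ then r else 1 := by
      intro i
      unfold thinK
      by_cases h1 : i ∈ R σ
      · simp [h1]
      · by_cases h2 : i ∈ D
        · by_cases h3 : σ i <;> simp [h1, h2, h3]
        · by_cases h3 : σ i <;> simp [h1, h2, h3]
    rw [Finset.prod_congr rfl (fun i _ => hcoord i), Finset.prod_ite_mem,
      Finset.univ_inter, Finset.prod_const]
  -- the joint quantity
  set J : ℝ := ∑ σ ∈ T, cubeW a b D σ * ∑ ρ : ι → Bool, ∏ i, thinK (R σ) D r σ i (ρ i)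
    with hJ
  -- lower bound for J
  have hlow : r ^ k * ∑ σ ∈ T, cubeW a b D σ ≤ J := by
    rw [hJ, Finset.mul_sum]
    refine Finset.sum_le_sum fun σ hσ => ?_
    rw [hKsum σ hσ, mul_comm]
    exact mul_le_mul_of_nonneg_left (pow_le_pow_of_le_one hr0 hr1 (hRcard σ hσ))
      (cubeW_nonneg ha hb D σ)
  -- swap the double sum
  have hswap : J = ∑ ρ : ι → Bool, ∑ σ ∈ T,
      cubeW a b D σ * ∏ i, thinK (R σ) D r σ i (ρ i) := by
    rw [hJ]
    simp_rw [Finset.mul_sum]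
    exact Finset.sum_comm
  -- terms with ρ ∉ T vanish
  have hvanish : ∀ ρ : ι → Bool, ρ ∉ T →
      (∑ σ ∈ T, cubeW a b D σ * ∏ i, thinK (R σ) D r σ i (ρ i)) = 0 := by
    intro ρ hρ
    refine Finset.sum_eq_zero fun σ hσ => ?_
    by_contra hne
    have hKne : (∏ i, thinK (R σ) D r σ i (ρ i)) ≠ 0 := fun h => hne (by rw [h, mul_zero])
    rw [Finset.prod_ne_zero_iff] at hKne
    have hfac : ∀ i, thinK (R σ) D r σ i (ρ i) ≠ 0 := fun i => hKne i (Finset.mem_univ i)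
    have hRtrue : ∀ i ∈ R σ, ρ i = true := by
      intro i hi
      have := hfac i
      unfold thinK at this
      rw [if_pos hi] at this
      by_contra hfalse
      simp [Bool.not_eq_true] at hfalse
      rw [hfalse] at this
      simp at this
    refine hρ (hstab σ hσ ρ ?_ ?_ hRtrue)
    · intro i hiD hρi
      by_cases hiR : i ∈ R σ
      · exact hRopen σ hσ i hiR
      · by_contra hσi
        have := hfac i
        unfold thinK at this
        rw [if_neg hiR, if_pos hiD] at this
        simp only [Bool.not_eq_true] at hσi
        rw [hσi, hρi] at this
        simp at this
    · intro i hiD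
      have hiR : i ∉ R σ := fun h => hiD (hRD σ hσ h)
      have := hfac i
      unfold thinK at this
      rw [if_neg hiR, if_neg hiD] at this
      by_contra hne'
      rw [if_neg hne'] at this
      simp at this
  -- for ρ ∈ T, bound the inner sum by the primed weight
  have hup : ∀ ρ ∈ T, (∑ σ ∈ T, cubeW a b D σ * ∏ i, thinK (R σ) D r σ i (ρ i))
      ≤ cubeW a' b' D ρ := by
    intro ρ _
    -- first drop the witness indicator
    have hdrop : ∀ σ ∈ T, (∏ i, thinK (R σ) D r σ i (ρ i)) ≤
        ∏ i, thinK (∅ : Finset ι) D r σ i (ρ i) := by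
      intro σ hσ
      refine Finset.prod_le_prod (fun i _ => thinK_nonneg hr0 hr1 σ i _) fun i _ => ?_
      unfold thinK
      by_cases hiR : i ∈ R σ
      · have hiD : i ∈ D := hRD σ hσ hiR
        have hσi : σ i = true := hRopen σ hσ i hiR
        rw [if_pos hiR, if_neg (Finset.notMem_empty i), if_pos hiD, hσi, if_pos rfl]
        by_cases hρi : ρ i <;> simp [hρi, h1r]
      · rw [if_neg hiR, if_neg (Finset.notMem_empty i)]
    calc (∑ σ ∈ T, cubeW a b D σ * ∏ i, thinK (R σ) D r σ i (ρ i))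
        ≤ ∑ σ ∈ T, cubeW a b D σ * ∏ i, thinK (∅ : Finset ι) D r σ i (ρ i) := by
          exact Finset.sum_le_sum fun σ hσ =>
            mul_le_mul_of_nonneg_left (hdrop σ hσ) (cubeW_nonneg ha hb D σ)
      _ ≤ ∑ σ : ι → Bool, cubeW a b D σ * ∏ i, thinK (∅ : Finset ι) D r σ i (ρ i) := by
          refine Finset.sum_le_sum_of_subset_of_nonneg (Finset.subset_univ T)
            fun σ _ _ => mul_nonneg (cubeW_nonneg ha hb D σ)
              (Finset.prod_nonneg fun i _ => thinK_nonneg hr0 hr1 σ i _)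
      _ = cubeW a' b' D ρ := by
          have hform : ∀ σ : ι → Bool, cubeW a b D σ * ∏ i, thinK (∅ : Finset ι) D r σ i (ρ i)
              = ∏ i, ((if i ∈ D then (if σ i then a else b) else 1) *
                  thinK (∅ : Finset ι) D r (fun _ => σ i) i (ρ i)) := by
            intro σ
            rw [cubeW_eq_prod_univ, ← Finset.prod_mul_distrib]
            exact Finset.prod_congr rfl fun i _ => rfl
          simp_rw [hform]
          rw [sum_cube_prod (f := fun i s => (if i ∈ D then (if s then a else b) else 1) *
            thinK (∅ : Finset ι) D r (fun _ => s) i (ρ i))]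
          · rw [cubeW_eq_prod_univ]
            refine Finset.prod_congr rfl fun i _ => ?_
            unfold thinK
            rw [if_neg (Finset.notMem_empty i), if_neg (Finset.notMem_empty i)]
            by_cases hiD : i ∈ D
            · by_cases hρi : ρ i <;> simp [hiD, hρi] <;> linarith
            · by_cases hρi : ρ i <;> simp [hiD, hρi]
  calc r ^ k * ∑ σ ∈ T, cubeW a b D σ ≤ J := hlow
    _ = ∑ ρ : ι → Bool, ∑ σ ∈ T, cubeW a b D σ * ∏ i, thinK (R σ) D r σ i (ρ i) := hswap
    _ = ∑ ρ ∈ T, ∑ σ ∈ T, cubeW a b D σ * ∏ i, thinK (R σ) D r σ i (ρ i) := by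
        symm
        refine Finset.sum_subset (Finset.subset_univ T) fun ρ _ hρ => hvanish ρ hρ
    _ ≤ ∑ ρ ∈ T, cubeW a' b' D ρ := Finset.sum_le_sum hup
end Thinning

end AuxExpDecay
-- graph helper segment (to be concatenated)
section GraphHelpers
variable {V : Type*} {G : SimpleGraph V}

/-- Edges of `G` with both endpoints in `W`. -/
def innerE (G : SimpleGraph V) (W : Set V) : Set (Sym2 V) :=
  {e | e ∈ G.edgeSet ∧ ∀ v ∈ e, v ∈ W}

/-- Edges of `G` with an endpoint in `W` and an endpoint outside. -/
def bdE (G : SimpleGraph V) (W : Set V) : Set (Sym2 V) :=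
  {e | e ∈ G.edgeSet ∧ (∃ v ∈ e, v ∈ W) ∧ ¬ (∀ v ∈ e, v ∈ W)}

/-- Graph of open inner edges. -/
def inGraph (G : SimpleGraph V) (W : Set V) (ω : Sym2 V → Bool) : SimpleGraph V :=
  SimpleGraph.fromEdgeSet {e | e ∈ innerE G W ∧ ω e = true}

def psi (G : SimpleGraph V) (v₀ : V) (W : Set V) (ω : Sym2 V → Bool) : Prop :=
  ∀ u ∈ W, (inGraph G W ω).Reachable v₀ u

def bdClosed (G : SimpleGraph V) (W : Set V) (ω : Sym2 V → Bool) : Prop :=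
  ∀ e ∈ bdE G W, ω e = false

lemma openSubgraph_adj {ω : Sym2 V → Bool} {x y : V} :
    (openSubgraph G ω).Adj x y ↔ G.Adj x y ∧ ω s(x, y) = true := by
  unfold openSubgraph
  rw [SimpleGraph.deleteEdges_adj]
  simp [Set.mem_setOf_eq, Bool.not_eq_false]

lemma inGraph_adj {W : Set V} {ω : Sym2 V → Bool} {x y : V} :
    (inGraph G W ω).Adj x y ↔ (s(x, y) ∈ innerE G W ∧ ω s(x, y) = true) ∧ x ≠ y := by
  unfold inGraph
  rw [SimpleGraph.fromEdgeSet_adj]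
  rfl

lemma inGraph_le_open {W : Set V} {ω : Sym2 V → Bool} :
    inGraph G W ω ≤ openSubgraph G ω := by
  intro x y h
  rw [inGraph_adj] at h
  rw [openSubgraph_adj]
  exact ⟨h.1.1.1, h.1.2⟩

lemma inGraph_le {W : Set V} {ω : Sym2 V → Bool} : inGraph G W ω ≤ G := by
  intro x y h
  rw [inGraph_adj] at h
  exact h.1.1.1

lemma open_walk_conf {W : Set V} {ω : Sym2 V → Bool} (hbd : bdClosed G W ω)
    {a u : V} (w : (openSubgraph G ω).Walk a u) :
    a ∈ W → u ∈ W ∧ (inGraph G W ω).Reachable a u := by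
  induction w with
  | nil => exact fun ha => ⟨ha, SimpleGraph.Reachable.refl _⟩
  | @cons x y z h w ih =>
    intro hx
    obtain ⟨hGadj, hopen⟩ := openSubgraph_adj.1 h
    have hy : y ∈ W := by
      by_contra hy
      have hbde : s(x, y) ∈ bdE G W := by
        refine ⟨G.mem_edgeSet.mpr hGadj, ⟨x, ?_, hx⟩, ?_⟩
        · simp [Sym2.mem_iff]
        · intro hall
          exact hy (hall y (by simp [Sym2.mem_iff]))
      have := hbd _ hbde
      rw [this] at hopen
      exact Bool.false_ne_true hopen
    have hadj' : (inGraph G W ω).Adj x y := by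
      rw [inGraph_adj]
      refine ⟨⟨⟨G.mem_edgeSet.mpr hGadj, ?_⟩, hopen⟩, hGadj.ne⟩
      intro v hv
      rw [Sym2.mem_iff] at hv
      rcases hv with rfl | rfl
      exacts [hx, hy]
    obtain ⟨hz, hr⟩ := ih hy
    exact ⟨hz, hadj'.reachable.trans hr⟩

lemma inGraph_walk_support {W : Set V} {ω : Sym2 V → Bool}
    {a u : V} (w : (inGraph G W ω).Walk a u) :
    a ∈ W → ∀ x ∈ w.support, x ∈ W := by
  induction w with
  | nil =>
    intro ha x hx
    rw [SimpleGraph.Walk.support_nil, List.mem_singleton] at hx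
    rwa [hx]
  | @cons x y z h w ih =>
    intro hx v hv
    rw [SimpleGraph.Walk.support_cons, List.mem_cons] at hv
    have hy : y ∈ W := by
      obtain ⟨⟨he, _⟩, _⟩ := inGraph_adj.1 h
      exact he.2 y (by simp [Sym2.mem_iff])
    rcases hv with rfl | hv
    · exact hx
    · exact ih hy v hv

lemma cluster_eq_iff {v₀ : V} {W : Set V} (hv₀W : v₀ ∈ W) (ω : Sym2 V → Bool) :
    percCluster G ω v₀ = W ↔ bdClosed G W ω ∧ psi G v₀ W ω := by
  constructor
  · intro hC
    have hbd : bdClosed G W ω := by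
      intro e he
      obtain ⟨heG, ⟨x, hxe, hxW⟩, hnall⟩ := he
      by_contra hne
      rw [Bool.not_eq_false] at hne
      refine hnall fun v hv => ?_
      induction e using Sym2.inductionOn with
      | hf a b =>
        rw [Sym2.mem_iff] at hxe hv
        have hadj : G.Adj a b := G.mem_edgeSet.1 heG
        have hreach : (openSubgraph G ω).Reachable v₀ x := by rw [← hC] at hxW; exact hxW
        have hxy : (openSubgraph G ω).Adj a b := openSubgraph_adj.2 ⟨hadj, hne⟩
        have hva : (openSubgraph G ω).Reachable v₀ a ∧ (openSubgraph G ω).Reachable v₀ b := by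
          rcases hxe with rfl | rfl
          · exact ⟨hreach, hreach.trans hxy.reachable⟩
          · exact ⟨hreach.trans hxy.symm.reachable, hreach⟩
        rcases hv with rfl | rfl
        · rw [← hC]; exact hva.1
        · rw [← hC]; exact hva.2
    refine ⟨hbd, fun u huW => ?_⟩
    have : u ∈ percCluster G ω v₀ := hC ▸ huW
    obtain ⟨w⟩ := this
    exact (open_walk_conf hbd w hv₀W).2
  · rintro ⟨hbd, hpsi⟩
    ext u
    constructor
    · rintro ⟨w⟩
      exact (open_walk_conf hbd w hv₀W).1
    · intro huW
      exact ((hpsi u huW).mono inGraph_le_open)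

def ballSet (G : SimpleGraph V) (v₀ : V) : ℕ → Set V
  | 0 => {v₀}
  | k + 1 => ballSet G v₀ k ∪ ⋃ v ∈ ballSet G v₀ k, G.neighborSet v

lemma ballSet_mono {v₀ : V} {k m : ℕ} (h : k ≤ m) : ballSet G v₀ k ⊆ ballSet G v₀ m := by
  induction m with
  | zero => rw [Nat.le_zero.1 h]
  | succ m ih =>
    rcases Nat.lt_or_ge k (m + 1) with hm | hm
    · exact (ih (Nat.lt_succ_iff.1 hm)).trans Set.subset_union_left
    · rw [Nat.le_antisymm h hm]

lemma ballSet_finite {v₀ : V} (hnb : ∀ v, (G.neighborSet v).Finite) (k : ℕ) :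
    (ballSet G v₀ k).Finite := by
  induction k with
  | zero => exact Set.finite_singleton v₀
  | succ k ih => exact ih.union (Set.Finite.biUnion ih fun v _ => hnb v)

lemma walk_mem_ballSet {v₀ : V} {k : ℕ} {u w : V} (p : G.Walk u w)
    (hk : u ∈ ballSet G v₀ k) : w ∈ ballSet G v₀ (k + p.length) := by
  induction p generalizing k with
  | nil => simpa using hk
  | @cons x y z h p ih =>
    have hy : y ∈ ballSet G v₀ (k + 1) := by
      refine Set.mem_union_right _ ?_
      exact Set.mem_biUnion hk h
    have := ih hy
    rwa [SimpleGraph.Walk.length_cons, show k + (p.length + 1) = k + 1 + p.length by ring]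

lemma psi_subset_ball {v₀ : V} {W : Set V} {ω : Sym2 V → Bool}
    (hWfin : W.Finite) (hv₀ : v₀ ∈ W) (hψ : psi G v₀ W ω) {n : ℕ}
    (hn : W.ncard = n) (hn1 : 1 ≤ n) : W ⊆ ballSet G v₀ (n - 1) := by
  classical
  intro u hu
  obtain ⟨w⟩ := hψ u hu
  set p := w.toPath with hp
  have hsupp : ∀ x ∈ (p : (inGraph G W ω).Walk v₀ u).support, x ∈ W := by
    intro x hx
    exact inGraph_walk_support (p : (inGraph G W ω).Walk v₀ u) hv₀ x hx
  have hnodup : (p : (inGraph G W ω).Walk v₀ u).support.Nodup := p.2.support_nodup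
  have hlen : (p : (inGraph G W ω).Walk v₀ u).length + 1 ≤ n := by
    have hcard : (p : (inGraph G W ω).Walk v₀ u).support.toFinset.card =
        (p : (inGraph G W ω).Walk v₀ u).support.length := List.toFinset_card_of_nodup hnodup
    have hsub : ↑(p : (inGraph G W ω).Walk v₀ u).support.toFinset ⊆ W := by
      intro x hx
      simp only [List.coe_toFinset, Set.mem_setOf_eq] at hx
      exact hsupp x hx
    have hle : (p : (inGraph G W ω).Walk v₀ u).support.toFinset.card ≤ n := by
      rw [← hn]
      have := Set.ncard_le_ncard hsub hWfin
      rwa [Set.ncard_coe_finset] at this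
    rw [hcard, SimpleGraph.Walk.length_support] at hle
    exact hle
  have hlee : (p : (inGraph G W ω).Walk v₀ u).length ≤ n - 1 := by omega
  have hG : inGraph G W ω ≤ G := inGraph_le
  set q := SimpleGraph.Walk.mapLe hG (p : (inGraph G W ω).Walk v₀ u) with hq
  have hql : q.length = (p : (inGraph G W ω).Walk v₀ u).length := by
    rw [hq]; exact SimpleGraph.Walk.length_map _ _
  have hball := walk_mem_ballSet (v₀ := v₀) q (by rfl : v₀ ∈ ballSet G v₀ 0)
  rw [Nat.zero_add] at hball
  exact ballSet_mono (hql ▸ hlee) hball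

lemma psi_induce_connected {v₀ : V} {W : Set V} {ω : Sym2 V → Bool}
    (hv₀ : v₀ ∈ W) (hψ : psi G v₀ W ω) :
    (G.induce W).Connected := by
  have key : ∀ (u : V) (hu : u ∈ W), (G.induce W).Reachable ⟨v₀, hv₀⟩ ⟨u, hu⟩ := by
    intro u hu
    obtain ⟨w⟩ := hψ u hu
    have : ∀ {a b : V} (w : (inGraph G W ω).Walk a b) (ha : a ∈ W) (hb : b ∈ W),
        (G.induce W).Reachable ⟨a, ha⟩ ⟨b, hb⟩ := by
      intro a b w
      induction w with
      | nil => intro ha hb; exact SimpleGraph.Reachable.refl _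
      | @cons x y z h p ih =>
        intro ha hb
        have hy : y ∈ W := by
          obtain ⟨⟨he, _⟩, _⟩ := inGraph_adj.1 h
          exact he.2 y (by simp [Sym2.mem_iff])
        have hadj : (G.induce W).Adj ⟨x, ha⟩ ⟨y, hy⟩ := by
          have : G.Adj x y := inGraph_le h
          exact this
        exact hadj.reachable.trans (ih hy hb)
    exact this w hv₀ hu
  rw [SimpleGraph.connected_iff]
  refine ⟨fun x y => ?_, ⟨⟨v₀, hv₀⟩⟩⟩
  exact (key x.1 x.2).symm.trans (key y.1 y.2)
end GraphHelpers
-- witness + boundary segment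
section Witness
variable {V : Type*} {G : SimpleGraph V} {v₀ : V} {W : Set V} {ω : Sym2 V → Bool}

lemma exists_witness (hWfin : W.Finite) (hv₀ : v₀ ∈ W) (hψ : psi G v₀ W ω) :
    ∃ R : Finset (Sym2 V),
      (∀ e ∈ R, e ∈ innerE G W ∧ ω e = true) ∧
      R.card + 1 ≤ W.ncard ∧
      ∀ u ∈ W, (SimpleGraph.fromEdgeSet ↑R).Reachable v₀ u := by
  classical
  have hpsi' : ∀ u ∈ W, (inGraph G W ω).Reachable v₀ u := hψ
  set K := inGraph G W ω with hK
  have hKadj : ∀ {x y : V}, K.Adj x y ↔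
      (s(x,y) ∈ innerE G W ∧ ω s(x,y) = true) ∧ x ≠ y := fun {x y} => inGraph_adj
  have hmemW : ∀ {x y : V}, K.Adj x y → x ∈ W ∧ y ∈ W := by
    intro x y h
    obtain ⟨⟨⟨_, hall⟩, _⟩, _⟩ := hKadj.1 h
    exact ⟨hall x (by simp), hall y (by simp)⟩
  have hex : ∀ u, u ∈ W → u ≠ v₀ → ∃ z : V, K.Adj z u ∧ K.dist v₀ z + 1 = K.dist v₀ u := by
    intro u hu hne
    obtain ⟨w, hw⟩ := (hpsi' u hu).exists_walk_length_eq_dist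
    cases hwr : w.reverse with
    | nil =>
      exact absurd rfl hne
    | cons h t =>
      rename_i z
      refine ⟨z, h.symm, ?_⟩
      have hlen : t.length + 1 = w.length := by
        have := congrArg (SimpleGraph.Walk.length) hwr
        rw [SimpleGraph.Walk.length_reverse] at this
        rw [SimpleGraph.Walk.length_cons] at this
        omega
      have hdz : K.dist v₀ z ≤ t.length := by
        have := SimpleGraph.dist_le t.reverse
        rwa [SimpleGraph.Walk.length_reverse] at this
      have hzu : K.dist v₀ u ≤ K.dist v₀ z + 1 := by
        obtain ⟨wz, hwz⟩ := (hpsi' z (hmemW h.symm).1).exists_walk_length_eq_dist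
        have := SimpleGraph.dist_le (wz.concat h.symm)
        rwa [SimpleGraph.Walk.length_concat, hwz] at this
      omega
  set pf : V → V := fun u =>
    if h : u ∈ W ∧ u ≠ v₀ then Classical.choose (hex u h.1 h.2) else v₀ with hpf
  have hpf_spec : ∀ u, u ∈ W → u ≠ v₀ →
      K.Adj (pf u) u ∧ K.dist v₀ (pf u) + 1 = K.dist v₀ u := by
    intro u hu hne
    rw [hpf]
    simp only [dif_pos (And.intro hu hne)]
    exact Classical.choose_spec (hex u hu hne)
  set R : Finset (Sym2 V) :=
    (hWfin.toFinset.erase v₀).image (fun u => s(pf u, u)) with hR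
  have hRmem : ∀ e ∈ R, e ∈ innerE G W ∧ ω e = true := by
    intro e he
    rw [hR, Finset.mem_image] at he
    obtain ⟨u, hu, rfl⟩ := he
    rw [Finset.mem_erase, Set.Finite.mem_toFinset] at hu
    exact ((hKadj.1 (hpf_spec u hu.2 hu.1).1).1)
  have hRcard : R.card + 1 ≤ W.ncard := by
    have h1 : R.card ≤ (hWfin.toFinset.erase v₀).card := Finset.card_image_le
    have h2 : (hWfin.toFinset.erase v₀).card = hWfin.toFinset.card - 1 :=
      Finset.card_erase_of_mem (by rwa [Set.Finite.mem_toFinset])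
    have h3 : hWfin.toFinset.card = W.ncard := (Set.ncard_eq_toFinset_card W hWfin).symm
    have h4 : 1 ≤ W.ncard := (Set.ncard_pos hWfin).2 ⟨v₀, hv₀⟩
    omega
  refine ⟨R, hRmem, hRcard, ?_⟩
  have main : ∀ k : ℕ, ∀ u, u ∈ W → K.dist v₀ u ≤ k →
      (SimpleGraph.fromEdgeSet (↑R : Set (Sym2 V))).Reachable v₀ u := by
    intro k
    induction k with
    | zero =>
      intro u hu hd
      have : v₀ = u := ((hpsi' u hu).dist_eq_zero_iff).1 (Nat.le_zero.1 hd)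
      rw [← this]
    | succ k ih =>
      intro u hu hd
      by_cases hne : u = v₀
      · rw [hne]
      · obtain ⟨hadj, hdist⟩ := hpf_spec u hu hne
        have hzW : pf u ∈ W := (hmemW hadj).1
        have hedge : s(pf u, u) ∈ R := by
          rw [hR, Finset.mem_image]
          exact ⟨u, by rw [Finset.mem_erase, Set.Finite.mem_toFinset]; exact ⟨hne, hu⟩, rfl⟩
        have hadj' : (SimpleGraph.fromEdgeSet (↑R : Set (Sym2 V))).Adj (pf u) u := by
          rw [SimpleGraph.fromEdgeSet_adj]
          exact ⟨hedge, hadj.ne⟩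
        exact (ih (pf u) hzW (by omega)).trans hadj'.reachable
  intro u hu
  exact main (K.dist v₀ u) u hu le_rfl

lemma incidenceSet_finite (hnb : ∀ v : V, (G.neighborSet v).Finite) (v : V) :
    (G.incidenceSet v).Finite := by
  refine Set.Finite.subset ((hnb v).image (fun u => s(v, u))) ?_
  rintro e ⟨heG, hve⟩
  induction e using Sym2.inductionOn with
  | hf a b =>
    have hadj : G.Adj a b := G.mem_edgeSet.1 heG
    rw [Sym2.mem_iff] at hve
    rcases hve with rfl | rfl
    · exact ⟨b, hadj, rfl⟩
    · exact ⟨a, hadj.symm, Sym2.eq_swap⟩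

lemma touching_finite (hnb : ∀ v : V, (G.neighborSet v).Finite) {A : Set V} (hA : A.Finite) :
    {e | e ∈ G.edgeSet ∧ ∃ v ∈ e, v ∈ A}.Finite := by
  refine Set.Finite.subset (Set.Finite.biUnion hA (fun v _ => incidenceSet_finite hnb v)) ?_
  rintro e ⟨heG, v, hve, hvA⟩
  exact Set.mem_biUnion hvA ⟨heG, hve⟩

lemma bdE_finite (hnb : ∀ v : V, (G.neighborSet v).Finite) (hW : W.Finite) :
    (bdE G W).Finite :=
  Set.Finite.subset (touching_finite hnb hW) (fun e he => ⟨he.1, he.2.1⟩)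

lemma extBoundary_card_le (hnb : ∀ v : V, (G.neighborSet v).Finite) (hW : W.Finite) :
    (extBoundary G W).ncard ≤ (bdE G W).ncard := by
  classical
  have hpick : ∀ u ∈ extBoundary G W, ∃ v, v ∈ W ∧ G.Adj u v := by
    rintro u ⟨_, v, hvW, hadj⟩; exact ⟨v, hvW, hadj⟩
  set pick : V → V := fun u =>
    if h : ∃ v, v ∈ W ∧ G.Adj u v then Classical.choose h else u with hpickdef
  have hpick_spec : ∀ u ∈ extBoundary G W, pick u ∈ W ∧ G.Adj u (pick u) := by
    intro u hu
    have h := hpick u hu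
    rw [hpickdef]
    simp only [dif_pos h]
    exact Classical.choose_spec h
  refine Set.ncard_le_ncard_of_injOn (fun u => s(u, pick u)) ?_ ?_ (bdE_finite hnb hW)
  · intro u hu
    obtain ⟨hpW, hadj⟩ := hpick_spec u hu
    refine ⟨G.mem_edgeSet.2 hadj, ⟨pick u, by simp, hpW⟩, ?_⟩
    intro hall
    exact hu.1 (hall u (by simp))
  · intro u hu u' hu' heq
    rw [Sym2.eq_iff] at heq
    rcases heq with ⟨rfl, _⟩ | ⟨h1, h2⟩
    · rfl
    · exfalso
      exact hu.1 (h1 ▸ (hpick_spec u' hu').1)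

lemma bdClosed_congr {ω ω' : Sym2 V → Bool} (h : ∀ e ∈ bdE G W, ω e = ω' e) :
    bdClosed G W ω ↔ bdClosed G W ω' := by
  unfold bdClosed
  constructor <;> intro H e he
  · rw [← h e he]; exact H e he
  · rw [h e he]; exact H e he

lemma inGraph_congr {ω ω' : Sym2 V → Bool} (h : ∀ e ∈ innerE G W, ω e = ω' e) :
    inGraph G W ω = inGraph G W ω' := by
  unfold inGraph
  congr 1
  ext e
  constructor
  · rintro ⟨h1, h2⟩; exact ⟨h1, by rw [← h e h1]; exact h2⟩
  · rintro ⟨h1, h2⟩; exact ⟨h1, by rw [h e h1]; exact h2⟩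

lemma psi_congr {ω ω' : Sym2 V → Bool} (h : ∀ e ∈ innerE G W, ω e = ω' e) :
    psi G v₀ W ω ↔ psi G v₀ W ω' := by
  unfold psi
  rw [inGraph_congr h]
end Witness

lemma prob_cyl {V : Type*} (G : SimpleGraph V) (p : ℝ≥0∞) (hp : p ≤ 1)
    (P : Measure (Sym2 V → Bool))
    (hind : iIndepFun
      (fun (e : G.edgeSet) (ω : Sym2 V → Bool) => ω (e : Sym2 V)) P)
    (hmarg : ∀ e : G.edgeSet, P.map (fun ω => ω (e : Sym2 V)) = (PMF.bernoulli p.toNNReal (by rw [← ENNReal.coe_le_coe, ENNReal.coe_toNNReal (ne_top_of_le_ne_top ENNReal.one_ne_top hp)]; simpa using hp)).toMeasure)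
    (SE : Finset (Sym2 V)) (hSE : ∀ e ∈ SE, e ∈ G.edgeSet) (σ : {x // x ∈ SE} → Bool) :
    P {ω | ∀ e : {x // x ∈ SE}, ω ↑e = σ e}
      = ∏ e : {x // x ∈ SE}, (cond (σ e) p (1 - p)) := by
  classical
  -- embed the finset into the edge index type
  set emb : {x // x ∈ SE} ↪ G.edgeSet :=
    ⟨fun x => ⟨x.1, hSE x.1 x.2⟩, by
      intro a b h
      apply Subtype.ext
      injection h⟩ with hemb
  set S' : Finset G.edgeSet := Finset.univ.map emb with hS'
  set sets : G.edgeSet → Set Bool := fun i =>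
    if h : (i : Sym2 V) ∈ SE then {σ ⟨i, h⟩} else Set.univ with hsets
  have hmemS' : ∀ (i : G.edgeSet), i ∈ S' ↔ (i : Sym2 V) ∈ SE := by
    intro i
    rw [hS', Finset.mem_map]
    constructor
    · rintro ⟨x, _, rfl⟩; exact x.2
    · intro h; exact ⟨⟨i, h⟩, Finset.mem_univ _, Subtype.ext rfl⟩
  have hset_eq : {ω : Sym2 V → Bool | ∀ e : {x // x ∈ SE}, ω ↑e = σ e}
      = ⋂ i ∈ S', (fun ω : Sym2 V → Bool => ω (i : Sym2 V)) ⁻¹' sets i := by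
    ext ω
    simp only [Set.mem_setOf_eq, Set.mem_iInter, Set.mem_preimage]
    constructor
    · intro h i hi
      have hmem := (hmemS' i).1 hi
      rw [hsets]
      simp only [dif_pos hmem]
      exact Set.mem_singleton_iff.2 (h ⟨i, hmem⟩)
    · intro h e
      have hiS : (⟨(e : Sym2 V), hSE e.1 e.2⟩ : G.edgeSet) ∈ S' := (hmemS' _).2 e.2
      have := h _ hiS
      rw [hsets] at this
      simp only [dif_pos e.2] at this
      exact this
  have hmeas : ∀ i ∈ S', MeasurableSet (sets i) := fun i _ => trivial
  rw [hset_eq, hind.measure_inter_preimage_eq_mul S' hmeas]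
  rw [hS', Finset.prod_map]
  refine Finset.prod_congr rfl fun x _ => ?_
  have h1 : sets (emb x) = {σ x} := by
    rw [hsets]
    have hx2 : ((emb x : G.edgeSet) : Sym2 V) ∈ SE := x.2
    simp only [dif_pos hx2]
    have hxx : (⟨↑(emb x), hx2⟩ : {x // x ∈ SE}) = x := Subtype.ext rfl
    rw [hxx]
  rw [h1]
  have hmap := hmarg (emb x)
  have hPx : P ((fun ω : Sym2 V → Bool => ω ↑(emb x)) ⁻¹' {σ x})
      = (PMF.bernoulli p.toNNReal (by rw [← ENNReal.coe_le_coe, ENNReal.coe_toNNReal (ne_top_of_le_ne_top ENNReal.one_ne_top hp)]; simpa using hp)).toMeasure {σ x} := by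
    rw [← hmap, Measure.map_apply (measurable_pi_apply _) (measurableSet_singleton _)]
  rw [hPx, PMF.toMeasure_apply_singleton _ _ (measurableSet_singleton _),
    PMF.bernoulli_apply]
  cases σ x <;> simp [ENNReal.coe_toNNReal (ne_top_of_le_ne_top ENNReal.one_ne_top hp), ENNReal.coe_sub]

/-- On a locally finite graph of maximum degree `d` with anchored Cheeger
constant `≥ κ > 0` at `v₀`, Bernoulli(p) bond percolation with `p > 1/(1+κ)` has an
exponentially decaying cluster size distribution at `v₀`. -/
theorem exp_decay_of_weakly_nonamenable
    {V : Type*} (G : SimpleGraph V) (d : ℕ)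
    (hdeg : ∀ v : V, (G.neighborSet v).encard ≤ d) (v₀ : V)
    (κ : ℝ) (hκ : 0 < κ)
    (hcheeger : ∀ W : Set V, v₀ ∈ W → W.Finite → (G.induce W).Connected →
      κ * W.ncard ≤ (extBoundary G W).ncard)
    (p : ℝ≥0∞) (hp : p ≤ 1) (hpgt : 1 / (1 + κ) < p.toReal)
    (P : Measure (Sym2 V → Bool)) (hP : IsBernoulliPercolation G p hp P) :
    ∃ γ > (0 : ℝ), ∀ n : ℕ, 1 ≤ n →
      P {ω | (percCluster G ω v₀).Finite ∧ (percCluster G ω v₀).ncard = n}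
        ≤ ENNReal.ofReal (Real.exp (-γ * n)) := by
  classical
  obtain ⟨hprob, hind, hmarg⟩ := hP
  have hnb : ∀ v : V, (G.neighborSet v).Finite := by
    intro v
    rw [← Set.encard_lt_top_iff]
    exact lt_of_le_of_lt (hdeg v) (by exact_mod_cast lt_top_iff_ne_top.2 (by simp))
  have hp_ne : p ≠ ⊤ := fun h => by rw [h] at hp; exact absurd hp (by simp)
  set pr := p.toReal with hprdef
  have hpr1 : pr ≤ 1 := by
    have := ENNReal.toReal_mono (by norm_num : (1:ℝ≥0∞) ≠ ⊤) hp
    simpa using this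
  obtain ⟨q, hq0, hqpr, hq1, hglt⟩ := choose_q pr κ hκ hpgt hpr1
  have hpr0 : 0 < pr := lt_trans hq0 hqpr
  have h1q : 0 < 1 - q := by linarith
  have h1pr : 0 ≤ 1 - pr := by linarith
  set A := pr / q with hA
  set B := (1 - pr) / (1 - q) with hB
  have hA1 : 1 ≤ A := (one_le_div hq0).2 hqpr.le
  have hA0 : 0 < A := by positivity
  have hB0 : 0 ≤ B := by positivity
  have hB1 : B ≤ 1 := by rw [hB, div_le_one h1q]; linarith
  set g := A * B ^ κ with hgdef
  have hg0 : 0 ≤ g := by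
    have := Real.rpow_nonneg hB0 κ
    positivity
  set g' := max g (Real.exp (-1)) with hg'def
  have hg'0 : 0 < g' := lt_of_lt_of_le (Real.exp_pos _) (le_max_right _ _)
  have hg'1 : g' < 1 := by
    apply max_lt hglt
    rw [Real.exp_lt_one_iff]; norm_num
  have hgg' : g ≤ g' := le_max_left _ _
  refine ⟨-Real.log g', neg_pos.2 (Real.log_neg hg'0 hg'1), fun n hn => ?_⟩
  -- the finite stage
  set Bn := ballSet G v₀ n with hBndef
  have hBnfin : Bn.Finite := ballSet_finite hnb n
  set SEset := {e | e ∈ G.edgeSet ∧ ∃ v ∈ e, v ∈ Bn} with hSEset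
  have hSEfin : SEset.Finite := touching_finite hnb hBnfin
  set SE := hSEfin.toFinset with hSEdef
  have hSEedge : ∀ e ∈ SE, e ∈ G.edgeSet := fun e he => ((hSEfin.mem_toFinset).1 he).1
  set ext : ({x // x ∈ SE} → Bool) → (Sym2 V → Bool) :=
    fun σ e => if h : e ∈ SE then σ ⟨e, h⟩ else false with hextdef
  have hext_coe : ∀ (σ : {x // x ∈ SE} → Bool) (i : {x // x ∈ SE}), ext σ ↑i = σ i := by
    intro σ i
    rw [hextdef]
    simp only [dif_pos i.2, Subtype.coe_eta]
  have hext_mem : ∀ (σ : {x // x ∈ SE} → Bool) (e : Sym2 V) (he : e ∈ SE),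
      ext σ e = σ ⟨e, he⟩ := by
    intro σ e he; rw [hextdef]; simp only [dif_pos he]
  set 𝒲 : Finset (Finset V) :=
    (hBnfin.toFinset.powerset).filter (fun W => v₀ ∈ W ∧ W.card = n) with h𝒲
  set TT : Finset V → Finset ({x // x ∈ SE} → Bool) := fun W =>
    Finset.univ.filter (fun σ => bdClosed G ↑W (ext σ) ∧ psi G v₀ ↑W (ext σ)) with hTT
  have h𝒲mem : ∀ W ∈ 𝒲, (↑W : Set V) ⊆ Bn ∧ v₀ ∈ W ∧ W.card = n := by
    intro W hW
    rw [h𝒲, Finset.mem_filter, Finset.mem_powerset] at hW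
    refine ⟨?_, hW.2⟩
    intro x hx
    have := hW.1 hx
    rwa [Set.Finite.mem_toFinset] at this
  have hsubE : ∀ W : Finset V, (↑W : Set V) ⊆ Bn →
      (∀ e ∈ innerE G ↑W, e ∈ SE) ∧ (∀ e ∈ bdE G ↑W, e ∈ SE) := by
    intro W hWBn
    constructor
    · intro e he
      rw [hSEdef, Set.Finite.mem_toFinset]
      obtain ⟨h1, h2⟩ := he
      refine ⟨h1, ?_⟩
      induction e using Sym2.inductionOn with
      | hf a b => exact ⟨a, by simp, hWBn (h2 a (by simp))⟩
    · intro e he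
      rw [hSEdef, Set.Finite.mem_toFinset]
      obtain ⟨h1, ⟨v, hve, hvW⟩, _⟩ := he
      exact ⟨h1, v, hve, hWBn hvW⟩
  have hiff : ∀ W ∈ 𝒲, ∀ ω : Sym2 V → Bool,
      percCluster G ω v₀ = ↑W ↔ (fun i : {x // x ∈ SE} => ω ↑i) ∈ TT W := by
    intro W hW ω
    obtain ⟨hWBn, hv₀W, hcard⟩ := h𝒲mem W hW
    obtain ⟨hinner, hbd⟩ := hsubE W hWBn
    have hagree_bd : ∀ e ∈ bdE G (↑W : Set V), ω e = ext (fun i : {x // x ∈ SE} => ω ↑i) e := by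
      intro e he
      exact (hext_mem (fun i : {x // x ∈ SE} => ω ↑i) e (hbd e he)).symm
    have hagree_in : ∀ e ∈ innerE G (↑W : Set V), ω e = ext (fun i : {x // x ∈ SE} => ω ↑i) e := by
      intro e he
      exact (hext_mem (fun i : {x // x ∈ SE} => ω ↑i) e (hinner e he)).symm
    rw [cluster_eq_iff (Finset.mem_coe.2 hv₀W) ω]
    rw [bdClosed_congr hagree_bd, psi_congr hagree_in]
    simp only [hTT, Finset.mem_filter, Finset.mem_univ, true_and]
  set cyl : ({x // x ∈ SE} → Bool) → Set (Sym2 V → Bool) :=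
    fun σ => {ω | ∀ e : {x // x ∈ SE}, ω ↑e = σ e} with hcyl
  have hcyl_mem : ∀ σ ω, ω ∈ cyl σ ↔ (fun i : {x // x ∈ SE} => ω ↑i) = σ := by
    intro σ ω
    simp only [hcyl, Set.mem_setOf_eq]
    exact ⟨fun h => funext h, fun h e => congrFun h e⟩
  have hcylmeas : ∀ σ, MeasurableSet (cyl σ) := by
    intro σ
    have hrw : cyl σ = ⋂ e : {x // x ∈ SE}, (fun ω : Sym2 V → Bool => ω ↑e) ⁻¹' {σ e} := by
      ext ω; simp [hcyl, funext_iff]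
    rw [hrw]
    exact MeasurableSet.iInter fun e => (measurable_pi_apply _) (measurableSet_singleton _)
  have hcyl_disj : ∀ σ σ', σ ≠ σ' → Disjoint (cyl σ) (cyl σ') := by
    intro σ σ' hne
    rw [Set.disjoint_left]
    intro ω hσ hσ'
    exact hne (((hcyl_mem σ ω).1 hσ).symm.trans ((hcyl_mem σ' ω).1 hσ'))
  have hEW : ∀ W ∈ 𝒲, {ω | percCluster G ω v₀ = ↑W} = ⋃ σ ∈ TT W, cyl σ := by
    intro W hW
    ext ω
    rw [Set.mem_setOf_eq, hiff W hW ω, Set.mem_iUnion₂]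
    constructor
    · intro h; exact ⟨_, h, (hcyl_mem _ ω).2 rfl⟩
    · rintro ⟨σ, hσ, hω⟩
      rwa [(hcyl_mem σ ω).1 hω]
  have hEWmeas : ∀ W ∈ 𝒲, MeasurableSet {ω | percCluster G ω v₀ = ↑W} := by
    intro W hW
    rw [hEW W hW]
    exact (TT W).measurableSet_biUnion (fun σ _ => hcylmeas σ)
  have hPcyl : ∀ σ, P (cyl σ) = ENNReal.ofReal (cubeW pr (1 - pr) Finset.univ σ) := by
    intro σ
    simp only [hcyl]
    rw [prob_cyl G p hp P hind hmarg SE hSEedge σ]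
    rw [show cubeW pr (1 - pr) Finset.univ σ
      = ∏ i : {x // x ∈ SE}, (if σ i then pr else (1 - pr)) from rfl]
    rw [ENNReal.ofReal_prod_of_nonneg
      (fun i _ => by by_cases h : σ i <;> simp [h, hpr0.le, h1pr])]
    refine Finset.prod_congr rfl fun i _ => ?_
    by_cases h : σ i
    · simp only [h, cond_true, if_true]
      exact (ENNReal.ofReal_toReal hp_ne).symm
    · rw [Bool.not_eq_true] at h
      simp only [h, cond_false, Bool.false_eq_true, if_false]
      have h1top : (1 : ℝ≥0∞) - p ≠ ⊤ := ne_top_of_le_ne_top (by norm_num) tsub_le_self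
      rw [← ENNReal.ofReal_toReal h1top, ENNReal.toReal_sub_of_le hp (by norm_num),
        ENNReal.toReal_one]
  have hPEW : ∀ W ∈ 𝒲, P {ω | percCluster G ω v₀ = ↑W}
      = ∑ σ ∈ TT W, ENNReal.ofReal (cubeW pr (1 - pr) Finset.univ σ) := by
    intro W hW
    rw [hEW W hW]
    rw [measure_biUnion_finset (fun σ _ σ' _ hne => hcyl_disj σ σ' hne)
      (fun σ _ => hcylmeas σ)]
    exact Finset.sum_congr rfl fun σ _ => hPcyl σ
  have hevent : {ω | (percCluster G ω v₀).Finite ∧ (percCluster G ω v₀).ncard = n}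
      = ⋃ W ∈ 𝒲, {ω | percCluster G ω v₀ = ↑W} := by
    ext ω
    simp only [Set.mem_setOf_eq, Set.mem_iUnion₂]
    constructor
    · rintro ⟨hfin, hncard⟩
      set Wf := hfin.toFinset with hWf
      have hcoe : (↑Wf : Set V) = percCluster G ω v₀ := hfin.coe_toFinset
      have hv₀C : v₀ ∈ percCluster G ω v₀ := SimpleGraph.Reachable.refl _
      have hv₀Wf : v₀ ∈ Wf := by rw [hWf, Set.Finite.mem_toFinset]; exact hv₀C
      have hcardf : Wf.card = n := by
        rw [hWf, ← Set.ncard_eq_toFinset_card _ hfin]; exact hncard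
      have hclW : percCluster G ω v₀ = ↑Wf := hcoe.symm
      have hψ : psi G v₀ ↑Wf ω := ((cluster_eq_iff (Finset.mem_coe.2 hv₀Wf) ω).1 hclW).2
      have hsubBn : (↑Wf : Set V) ⊆ Bn := by
        have h1 : (↑Wf : Set V) ⊆ ballSet G v₀ (n - 1) :=
          psi_subset_ball (Wf.finite_toSet) (Finset.mem_coe.2 hv₀Wf) hψ
            (by rw [Set.ncard_coe_finset]; exact hcardf) hn
        exact h1.trans (ballSet_mono (Nat.sub_le n 1))
      refine ⟨Wf, ?_, hclW⟩
      rw [h𝒲, Finset.mem_filter, Finset.mem_powerset]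
      refine ⟨?_, hv₀Wf, hcardf⟩
      intro x hx
      rw [Set.Finite.mem_toFinset]
      exact hsubBn (Finset.mem_coe.2 hx)
    · rintro ⟨W, hW, hcl⟩
      obtain ⟨-, -, hcard⟩ := h𝒲mem W hW
      rw [hcl]
      exact ⟨W.finite_toSet, by rw [Set.ncard_coe_finset]; exact hcard⟩
  have hdisjW : (↑𝒲 : Set (Finset V)).PairwiseDisjoint
      (fun W => {ω | percCluster G ω v₀ = ↑W}) := by
    intro W hW W' hW' hne
    rw [Function.onFun]
    rw [Set.disjoint_left]
    intro ω h1 h2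
    have e1 : percCluster G ω v₀ = ↑W := h1
    have e2 : percCluster G ω v₀ = ↑W' := h2
    exact hne (Finset.coe_injective (e1.symm.trans e2))
  have hPmain : P {ω | (percCluster G ω v₀).Finite ∧ (percCluster G ω v₀).ncard = n}
      = ∑ W ∈ 𝒲, ∑ σ ∈ TT W, ENNReal.ofReal (cubeW pr (1 - pr) Finset.univ σ) := by
    rw [hevent, measure_biUnion_finset hdisjW (fun W hW => hEWmeas W hW)]
    exact Finset.sum_congr rfl hPEW
  have hofreal : ∑ W ∈ 𝒲, ∑ σ ∈ TT W, ENNReal.ofReal (cubeW pr (1 - pr) Finset.univ σ)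
      = ENNReal.ofReal (∑ W ∈ 𝒲, ∑ σ ∈ TT W, cubeW pr (1 - pr) Finset.univ σ) := by
    rw [ENNReal.ofReal_sum_of_nonneg
      (fun W _ => Finset.sum_nonneg fun σ _ => cubeW_nonneg hpr0.le h1pr _ σ)]
    exact Finset.sum_congr rfl fun W _ => (ENNReal.ofReal_sum_of_nonneg
      (fun σ _ => cubeW_nonneg hpr0.le h1pr _ σ)).symm
  -- the per-cluster comparison inequality
  have hperW : ∀ W ∈ 𝒲, ∑ σ ∈ TT W, cubeW pr (1 - pr) Finset.univ σ
      ≤ A ^ (n - 1) * B ^ (κ * (n : ℝ)) * ∑ σ ∈ TT W, cubeW q (1 - q) Finset.univ σ := by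
    intro W hW
    obtain ⟨hWBn, hv₀W, hcard⟩ := h𝒲mem W hW
    obtain ⟨hinner_sub, hbd_sub⟩ := hsubE W hWBn
    rcases Finset.eq_empty_or_nonempty (TT W) with hemp | ⟨σ₀, hσ₀⟩
    · rw [hemp]; simp
    · have hσ₀' := hσ₀
      simp only [hTT, Finset.mem_filter, Finset.mem_univ, true_and] at hσ₀'
      obtain ⟨hbd₀, hψ₀⟩ := hσ₀'
      have hWfin : (↑W : Set V).Finite := W.finite_toSet
      have hv₀W' : v₀ ∈ (↑W : Set V) := Finset.mem_coe.2 hv₀W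
      have hncW : (↑W : Set V).ncard = n := by rw [Set.ncard_coe_finset]; exact hcard
      set FW : Finset {x // x ∈ SE} :=
        Finset.univ.filter (fun i => (↑i : Sym2 V) ∈ bdE G ↑W) with hFW
      have hFWcoe : ↑(FW.image (Subtype.val)) = bdE G (↑W : Set V) := by
        ext e
        simp only [Finset.coe_image, Set.mem_image, Finset.mem_coe]
        constructor
        · rintro ⟨i, hi, rfl⟩
          rw [hFW, Finset.mem_filter] at hi
          exact hi.2
        · intro he
          exact ⟨⟨e, hbd_sub e he⟩,
            by rw [hFW, Finset.mem_filter]; exact ⟨Finset.mem_univ _, he⟩, rfl⟩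
      have hFWcard : (bdE G (↑W : Set V)).ncard = FW.card := by
        rw [← hFWcoe, Set.ncard_coe_finset,
          Finset.card_image_of_injective _ Subtype.val_injective]
      have hkn : κ * (n : ℝ) ≤ (FW.card : ℝ) := by
        have h1 := hcheeger ↑W hv₀W' hWfin (psi_induce_connected hv₀W' hψ₀)
        rw [hncW] at h1
        have h2 := extBoundary_card_le hnb hWfin
        have h3 : ((extBoundary G ↑W).ncard : ℝ) ≤ ((bdE G (↑W : Set V)).ncard : ℝ) := by
          exact_mod_cast h2
        rw [hFWcard] at h3
        linarith
      have hFWpos : 1 ≤ FW.card := by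
        rcases Nat.eq_zero_or_pos FW.card with h0 | h1
        · exfalso
          rw [h0] at hkn
          push_cast at hkn
          nlinarith [hκ, (show (1:ℝ) ≤ (n:ℝ) by exact_mod_cast hn)]
        · exact h1
      set Rmap : ({x // x ∈ SE} → Bool) → Finset (Sym2 V) := fun σ =>
        if h : σ ∈ TT W then
          Classical.choose (exists_witness hWfin hv₀W'
            (by simp only [hTT, Finset.mem_filter, Finset.mem_univ, true_and] at h
                exact h.2))
        else ∅ with hRmap
      have hRmap_spec : ∀ σ ∈ TT W,
          (∀ e ∈ Rmap σ, e ∈ innerE G ↑W ∧ ext σ e = true) ∧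
          ((Rmap σ).card + 1 ≤ (↑W : Set V).ncard ∧
          ∀ u ∈ (↑W : Set V), (SimpleGraph.fromEdgeSet ↑(Rmap σ)).Reachable v₀ u) := by
        intro σ hσ
        simp only [hRmap, dif_pos hσ]
        have := Classical.choose_spec (exists_witness hWfin hv₀W'
          (by simp only [hTT, Finset.mem_filter, Finset.mem_univ, true_and] at hσ
              exact hσ.2 :
            psi G v₀ (↑W : Set V) (ext σ)))
        exact ⟨this.1, this.2.1, this.2.2⟩
      set Rc : ({x // x ∈ SE} → Bool) → Finset {x // x ∈ SE} := fun σ =>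
        Finset.univ.filter (fun i => (↑i : Sym2 V) ∈ Rmap σ) with hRc
      set D : Finset {x // x ∈ SE} := Finset.univ \ FW with hD
      have hTfalse : ∀ σ ∈ TT W, ∀ i ∈ FW, σ i = false := by
        intro σ hσ i hi
        simp only [hTT, Finset.mem_filter, Finset.mem_univ, true_and] at hσ
        rw [hFW, Finset.mem_filter] at hi
        have := hσ.1 _ hi.2
        rwa [hext_coe] at this
      have hpeel : ∀ (a b : ℝ), ∀ σ ∈ TT W, cubeW a b Finset.univ σ
          = b ^ FW.card * cubeW a b D σ := by
        intro a b σ hσ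
        rw [hD]
        exact cubeW_peel (Finset.subset_univ FW) (hTfalse σ hσ)
      have hRD : ∀ σ ∈ TT W, Rc σ ⊆ D := by
        intro σ hσ i hi
        simp only [hRc, Finset.mem_filter, Finset.mem_univ, true_and] at hi
        obtain ⟨hinn, -⟩ := (hRmap_spec σ hσ).1 _ hi
        rw [hD, Finset.mem_sdiff]
        refine ⟨Finset.mem_univ _, ?_⟩
        rw [hFW, Finset.mem_filter]
        rintro ⟨-, hbd'⟩
        exact hbd'.2.2 hinn.2
      have hRopen : ∀ σ ∈ TT W, ∀ i ∈ Rc σ, σ i = true := by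
        intro σ hσ i hi
        simp only [hRc, Finset.mem_filter, Finset.mem_univ, true_and] at hi
        obtain ⟨-, hopen⟩ := (hRmap_spec σ hσ).1 _ hi
        rwa [hext_coe] at hopen
      have hRcard : ∀ σ ∈ TT W, (Rc σ).card ≤ n - 1 := by
        intro σ hσ
        have h1 : (Rc σ).card = ((Rc σ).image Subtype.val).card :=
          (Finset.card_image_of_injective _ Subtype.val_injective).symm
        have h2 : (Rc σ).image Subtype.val ⊆ Rmap σ := by
          intro e he
          rw [Finset.mem_image] at he
          obtain ⟨i, hi, rfl⟩ := he
          simp only [hRc, Finset.mem_filter, Finset.mem_univ, true_and] at hi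
          exact hi
        have h3 := Finset.card_le_card h2
        have h4 := (hRmap_spec σ hσ).2.1
        rw [hncW] at h4
        omega
      have hstab : ∀ σ ∈ TT W, ∀ ρ : {x // x ∈ SE} → Bool,
          (∀ i ∈ D, ρ i = true → σ i = true) → (∀ i, i ∉ D → ρ i = σ i) →
          (∀ i ∈ Rc σ, ρ i = true) → ρ ∈ TT W := by
        intro σ hσ ρ hmono hfix hR
        have hσ' := hσ
        simp only [hTT, Finset.mem_filter, Finset.mem_univ, true_and] at hσ' ⊢
        refine ⟨?_, ?_⟩
        · intro e he
          have heSE : e ∈ SE := hbd_sub e he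
          have hiFW : (⟨e, heSE⟩ : {x // x ∈ SE}) ∈ FW := by
            rw [hFW, Finset.mem_filter]
            exact ⟨Finset.mem_univ _, he⟩
          have hiD : (⟨e, heSE⟩ : {x // x ∈ SE}) ∉ D := by
            rw [hD, Finset.mem_sdiff]
            push_neg
            intro
            exact hiFW
          rw [hext_mem ρ e heSE, hfix _ hiD, ← hext_mem σ e heSE]
          exact hσ'.1 e he
        · intro u hu
          have h3 := (hRmap_spec σ hσ).2.2 u hu
          refine h3.mono (SimpleGraph.fromEdgeSet_mono ?_)
          intro e he
          obtain ⟨hinn, -⟩ := (hRmap_spec σ hσ).1 e he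
          have heSE : e ∈ SE := hinner_sub e hinn
          have hiRc : (⟨e, heSE⟩ : {x // x ∈ SE}) ∈ Rc σ := by
            simp only [hRc, Finset.mem_filter, Finset.mem_univ, true_and]
            exact he
          refine ⟨hinn, ?_⟩
          rw [hext_mem ρ e heSE]
          exact hR _ hiRc
      have hthin := thinning (a := pr) (b := 1 - pr) (a' := q) (b' := 1 - q) (r := q / pr)
        hpr0.le h1pr (by positivity) (by rw [div_le_one hpr0]; exact hqpr.le)
        (by field_simp)
        (by field_simp; ring)
        D (TT W) (n - 1) Rc hRD hRopen hRcard hstab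
      -- assemble
      have hpeelp : ∑ σ ∈ TT W, cubeW pr (1 - pr) Finset.univ σ
          = (1 - pr) ^ FW.card * ∑ σ ∈ TT W, cubeW pr (1 - pr) D σ := by
        rw [Finset.mul_sum]
        exact Finset.sum_congr rfl (fun σ hσ => hpeel pr (1 - pr) σ hσ)
      have hpeelq : ∑ σ ∈ TT W, cubeW q (1 - q) Finset.univ σ
          = (1 - q) ^ FW.card * ∑ σ ∈ TT W, cubeW q (1 - q) D σ := by
        rw [Finset.mul_sum]
        exact Finset.sum_congr rfl (fun σ hσ => hpeel q (1 - q) σ hσ)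
      have hr0 : (0 : ℝ) < q / pr := by positivity
      have hrpow : (0 : ℝ) < (q / pr) ^ (n - 1) := pow_pos hr0 _
      have hApow : A ^ (n - 1) = (((q / pr) ^ (n - 1) : ℝ))⁻¹ := by
        rw [hA, ← inv_pow, inv_div]
      have hSumpD : ∑ σ ∈ TT W, cubeW pr (1 - pr) D σ
          ≤ A ^ (n - 1) * ∑ σ ∈ TT W, cubeW q (1 - q) D σ := by
        rw [hApow]
        calc ∑ σ ∈ TT W, cubeW pr (1 - pr) D σ
            = ((q / pr) ^ (n - 1))⁻¹ * ((q / pr) ^ (n - 1)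
                * ∑ σ ∈ TT W, cubeW pr (1 - pr) D σ) := by
              rw [← mul_assoc, inv_mul_cancel₀ (ne_of_gt hrpow), one_mul]
          _ ≤ ((q / pr) ^ (n - 1))⁻¹ * ∑ σ ∈ TT W, cubeW q (1 - q) D σ :=
              mul_le_mul_of_nonneg_left hthin (inv_nonneg.2 hrpow.le)
      have hBf : (1 - pr) ^ FW.card ≤ B ^ (κ * (n : ℝ)) * (1 - q) ^ FW.card := by
        have hsplit : (1 - pr) ^ FW.card = B ^ FW.card * (1 - q) ^ FW.card := by
          rw [hB, div_pow, div_mul_cancel₀]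
          exact pow_ne_zero _ (ne_of_gt h1q)
        rw [hsplit]
        refine mul_le_mul_of_nonneg_right ?_ (pow_nonneg h1q.le _)
        rcases eq_or_lt_of_le hB0 with hB0' | hBpos
        · rw [← hB0', zero_pow (by omega), Real.zero_rpow (by positivity : κ * (n:ℝ) ≠ 0)]
        · rw [← Real.rpow_natCast B FW.card]
          exact Real.rpow_le_rpow_of_exponent_ge hBpos hB1 hkn
      have hqsum_nonneg : 0 ≤ ∑ σ ∈ TT W, cubeW q (1 - q) D σ :=
        Finset.sum_nonneg fun σ _ => cubeW_nonneg hq0.le h1q.le _ σ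
      calc ∑ σ ∈ TT W, cubeW pr (1 - pr) Finset.univ σ
          = (1 - pr) ^ FW.card * ∑ σ ∈ TT W, cubeW pr (1 - pr) D σ := hpeelp
        _ ≤ (1 - pr) ^ FW.card * (A ^ (n - 1) * ∑ σ ∈ TT W, cubeW q (1 - q) D σ) :=
            mul_le_mul_of_nonneg_left hSumpD (pow_nonneg h1pr _)
        _ ≤ (B ^ (κ * (n : ℝ)) * (1 - q) ^ FW.card)
              * (A ^ (n - 1) * ∑ σ ∈ TT W, cubeW q (1 - q) D σ) :=
            mul_le_mul_of_nonneg_right hBf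
              (mul_nonneg (pow_nonneg hA0.le _) hqsum_nonneg)
        _ = A ^ (n - 1) * B ^ (κ * (n : ℝ))
              * ((1 - q) ^ FW.card * ∑ σ ∈ TT W, cubeW q (1 - q) D σ) := by ring
        _ = A ^ (n - 1) * B ^ (κ * (n : ℝ)) * ∑ σ ∈ TT W, cubeW q (1 - q) Finset.univ σ := by
            rw [← hpeelq]
  -- total q-mass is at most one
  have hdisjT : (↑𝒲 : Set (Finset V)).PairwiseDisjoint TT := by
    intro W hW W' hW' hne
    rw [Function.onFun, Finset.disjoint_left]
    intro σ h1 h2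
    apply hne
    apply Finset.coe_injective
    have hres : (fun i : {x // x ∈ SE} => ext σ ↑i) = σ := funext (hext_coe σ)
    have e1 : percCluster G (ext σ) v₀ = ↑W :=
      (hiff W (Finset.mem_coe.1 hW) (ext σ)).2 (by rw [hres]; exact h1)
    have e2 : percCluster G (ext σ) v₀ = ↑W' :=
      (hiff W' (Finset.mem_coe.1 hW') (ext σ)).2 (by rw [hres]; exact h2)
    exact e1.symm.trans e2
  have hWq_tot : ∑ W ∈ 𝒲, ∑ σ ∈ TT W, cubeW q (1 - q) Finset.univ σ ≤ 1 := by
    rw [← Finset.sum_biUnion hdisjT]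
    refine le_trans (Finset.sum_le_sum_of_subset_of_nonneg (Finset.subset_univ _)
      (fun σ _ _ => cubeW_nonneg hq0.le h1q.le _ σ)) ?_
    rw [sum_cubeW_univ (by ring : q + (1 - q) = 1)]
  -- final numeric bound
  have hM : A ^ (n - 1) * B ^ (κ * (n : ℝ)) ≤ g' ^ n := by
    have hBk : B ^ (κ * (n : ℝ)) = (B ^ κ) ^ n := by
      rw [Real.rpow_mul hB0, Real.rpow_natCast]
    rw [hBk]
    have h1 : A ^ (n - 1) ≤ A ^ n := pow_le_pow_right₀ hA1 (Nat.sub_le n 1)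
    calc A ^ (n - 1) * (B ^ κ) ^ n ≤ A ^ n * (B ^ κ) ^ n :=
          mul_le_mul_of_nonneg_right h1 (pow_nonneg (Real.rpow_nonneg hB0 κ) n)
      _ = g ^ n := by rw [hgdef, mul_pow]
      _ ≤ g' ^ n := pow_le_pow_left₀ hg0 hgg' n
  have hS : ∑ W ∈ 𝒲, ∑ σ ∈ TT W, cubeW pr (1 - pr) Finset.univ σ ≤ g' ^ n := by
    calc ∑ W ∈ 𝒲, ∑ σ ∈ TT W, cubeW pr (1 - pr) Finset.univ σ
        ≤ ∑ W ∈ 𝒲, A ^ (n - 1) * B ^ (κ * (n : ℝ))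
            * ∑ σ ∈ TT W, cubeW q (1 - q) Finset.univ σ := Finset.sum_le_sum hperW
      _ = A ^ (n - 1) * B ^ (κ * (n : ℝ))
            * ∑ W ∈ 𝒲, ∑ σ ∈ TT W, cubeW q (1 - q) Finset.univ σ := by
          rw [Finset.mul_sum]
      _ ≤ A ^ (n - 1) * B ^ (κ * (n : ℝ)) * 1 := by
          refine mul_le_mul_of_nonneg_left hWq_tot ?_
          exact mul_nonneg (pow_nonneg hA0.le _) (Real.rpow_nonneg hB0 _)
      _ = A ^ (n - 1) * B ^ (κ * (n : ℝ)) := mul_one _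
      _ ≤ g' ^ n := hM
  have hexp : Real.exp (-(-Real.log g') * ↑n) = g' ^ n := by
    rw [neg_neg, mul_comm, Real.exp_nat_mul, Real.exp_log hg'0]
  rw [hPmain, hofreal, hexp]
  exact ENNReal.ofReal_le_ofReal hS
end

section
/- Consider a critical Galton–Watson branching process (E[N] = 1, N not a.s. equal to 1) with finite-variance progeny distribution N, started from one individual, with total population size S. Then there is a constant c (depending on the law of N) such that P(S = n) ≤ c / n^{3/2} for all n ≥ 1. -/
open MeasureTheory ProbabilityTheory
open scoped ENNReal


open Finset
open Fin.NatCast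

section Cycle

/-- partial-sum walk `z k = x₀ + ⋯ + x_{k-1} - k`. -/
private def zwalk (x : ℕ → ℕ) (k : ℕ) : ℤ := (∑ j ∈ range k, (x j : ℤ)) - k

lemma sum_range_add' (f : ℕ → ℤ) (k n : ℕ) :
    ∑ j ∈ range (k + n), f j = (∑ j ∈ range k, f j) + ∑ j ∈ range n, f (k + j) := by
  induction n with
  | zero => simp
  | succ n ih => rw [← Nat.add_assoc, Finset.sum_range_succ, ih, Finset.sum_range_succ]; ring

/-- window sums of a periodic sequence -/
lemma window_sum {n : ℕ} (x : ℕ → ℕ) (hper : ∀ j, x (j + n) = x j)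
    (hsum : ∑ j ∈ range n, x j = n - 1) :
    ∀ k, ∑ j ∈ range n, x (k + j) = n - 1 := by
  intro k
  induction k with
  | zero => simpa using hsum
  | succ k ih =>
    have h1 : ∑ j ∈ range (n + 1), x (k + j) = x k + ∑ j ∈ range n, x (k + 1 + j) := by
      rw [Finset.sum_range_succ' (fun j => x (k + j))]
      simp [Nat.add_comm, Nat.add_assoc, Nat.add_left_comm]
    have h2 : ∑ j ∈ range (n + 1), x (k + j) = (∑ j ∈ range n, x (k + j)) + x (k + n) := by
      rw [Finset.sum_range_succ]
    have h3 : x (k + n) = x k := hper k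
    omega
    
end Cycle

section Cycle2
variable {n : ℕ} {x : ℕ → ℕ}

lemma zwalk_shift (hn : 1 ≤ n) (hper : ∀ j, x (j + n) = x j)
    (hsum : ∑ j ∈ range n, x j = n - 1) (k : ℕ) :
    zwalk x (k + n) = zwalk x k - 1 := by
  have hw := window_sum x hper hsum k
  have h1 : ∑ j ∈ range (k + n), (x j : ℤ) = (∑ j ∈ range k, (x j : ℤ)) + ∑ j ∈ range n, (x (k + j) : ℤ) :=
    sum_range_add' _ _ _
  have h2 : ∑ j ∈ range n, (x (k + j) : ℤ) = ((n : ℤ) - 1) := by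
    have h3 : ((∑ j ∈ range n, x (k + j) : ℕ) : ℤ) = ((n - 1 : ℕ) : ℤ) := by rw [hw]
    push_cast at h3
    rw [h3]
    omega
  simp only [zwalk, h1, h2]
  push_cast
  ring

lemma zwalk_diff (r m : ℕ) :
    zwalk x (r + m) - zwalk x r = (∑ j ∈ range m, (x (r + j) : ℤ)) - m := by
  simp only [zwalk, sum_range_add' (fun j => (x j : ℤ)) r m]
  push_cast
  ring

/-- A rotation being "good" (avoiding the level `m-1` before time `n`) forces the walk to stay
above its starting point. -/
lemma good_ge (hn : 1 ≤ n)
    {r : ℕ} (hg : ∀ m, 1 ≤ m → m < n → ∑ j ∈ range m, x (r + j) ≠ m - 1) :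
    ∀ m, m < n → zwalk x r ≤ zwalk x (r + m) := by
  intro m
  induction m with
  | zero => simp
  | succ m ih =>
    intro hm1
    have hle : zwalk x r ≤ zwalk x (r + m) := ih (by omega)
    have hstep : zwalk x (r + (m + 1)) = zwalk x (r + m) + (x (r + m) : ℤ) - 1 := by
      simp only [zwalk, ← Nat.add_assoc, Finset.sum_range_succ]
      push_cast
      ring
    have hne : zwalk x (r + (m + 1)) - zwalk x r ≠ -1 := by
      rw [zwalk_diff]
      have := hg (m + 1) (by omega) hm1
      have hcast : (∑ j ∈ range (m + 1), (x (r + j) : ℤ)) = ((∑ j ∈ range (m + 1), x (r + j) : ℕ) : ℤ) := by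
        push_cast; ring
      rw [hcast]
      omega
    have hxnn : (0 : ℤ) ≤ (x (r + m) : ℤ) := Int.natCast_nonneg _
    omega

/-- Uniqueness half of the cycle lemma. -/
lemma cycle_unique (hn : 1 ≤ n) (hper : ∀ j, x (j + n) = x j)
    (hsum : ∑ j ∈ range n, x j = n - 1)
    {r r' : ℕ} (hr : r < n) (hr' : r' < n)
    (hg : ∀ m, 1 ≤ m → m < n → ∑ j ∈ range m, x (r + j) ≠ m - 1)
    (hg' : ∀ m, 1 ≤ m → m < n → ∑ j ∈ range m, x (r' + j) ≠ m - 1) :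
    r = r' := by
  rcases lt_trichotomy r r' with h | h | h
  · exfalso
    have h1 : zwalk x r ≤ zwalk x r' := by
      have := good_ge hn hg (r' - r) (by omega)
      rwa [Nat.add_sub_cancel' h.le] at this
    have h2 : zwalk x r' ≤ zwalk x (r + n) := by
      have := good_ge hn hg' (r + n - r') (by omega)
      rwa [Nat.add_sub_cancel' (by omega)] at this
    have h3 : zwalk x (r + n) = zwalk x r - 1 := zwalk_shift hn hper hsum r
    omega
  · exact h
  · exfalso
    have h1 : zwalk x r' ≤ zwalk x r := by
      have := good_ge hn hg' (r - r') (by omega)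
      rwa [Nat.add_sub_cancel' h.le] at this
    have h2 : zwalk x r ≤ zwalk x (r' + n) := by
      have := good_ge hn hg (r' + n - r) (by omega)
      rwa [Nat.add_sub_cancel' (by omega)] at this
    have h3 : zwalk x (r' + n) = zwalk x r' - 1 := zwalk_shift hn hper hsum r'
    omega
end Cycle2

open Finset MeasureTheory ProbabilityTheory
open scoped ENNReal

section PartA
variable {Ω : Type*} [MeasurableSpace Ω] (P : Measure Ω) [IsProbabilityMeasure P]
  (X : ℕ → Ω → ℕ)

lemma fin_add_val {n : ℕ} [NeZero n] (r : Fin n) (j : ℕ) :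
    ((r + (j : Fin n) : Fin n) : ℕ) = (r.val + j) % n := by
  simp [Fin.add_def, Fin.val_natCast, Nat.add_mod]

lemma cylinder_meas (hmeas : ∀ j, Measurable (X j)) {n : ℕ} (g : Fin n → ℕ) (y : Fin n → ℕ) :
    MeasurableSet {ω | ∀ i : Fin n, X (g i) ω = y i} := by
  have : {ω | ∀ i : Fin n, X (g i) ω = y i} = ⋂ i : Fin n, (X (g i)) ⁻¹' {y i} := by
    ext ω; simp [Set.mem_iInter]
  rw [this]
  exact MeasurableSet.iInter fun i => (hmeas (g i)) (measurableSet_singleton _)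

lemma cylinder_prob (hmeas : ∀ j, Measurable (X j))
    (hiid : iIndepFun X P)
    (hident : ∀ j, IdentDistrib (X j) (X 0) P P)
    {n : ℕ} [NeZero n] (r : Fin n) (y : Fin n → ℕ) :
    P {ω | ∀ i : Fin n, X ((r + i : Fin n) : ℕ) ω = y i}
      = ∏ i : Fin n, P {ω | X 0 ω = y i} := by
  classical
  set s : ℕ → Set ℕ := fun j => {y ((j : Fin n) - r)} with hs
  have hset : {ω | ∀ i : Fin n, X ((r + i : Fin n) : ℕ) ω = y i}
      = ⋂ j ∈ Finset.range n, X j ⁻¹' s j := by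
    ext ω
    simp only [Set.mem_setOf_eq, Set.mem_iInter, Set.mem_preimage, hs, Set.mem_singleton_iff,
      Finset.mem_range]
    constructor
    · intro h j hj
      have h1 : ((j : Fin n) : ℕ) = j := by
        simp [Fin.val_natCast, Nat.mod_eq_of_lt hj]
      have := h ((j : Fin n) - r)
      rwa [add_sub_cancel, h1] at this
    · intro h i
      have hj : ((r + i : Fin n) : ℕ) < n := Fin.is_lt _
      have := h _ hj
      rw [Fin.cast_val_eq_self (r + i), add_sub_cancel_left] at this
      exact this
  rw [hset, iIndepFun_iff_measure_inter_preimage_eq_mul.1 hiid (Finset.range n)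
    (fun j _ => measurableSet_singleton _)]
  have hfac : ∀ j, X j ⁻¹' s j = {ω | X j ω = y ((j : Fin n) - r)} := by
    intro j; ext ω; simp [hs]
  have hid : ∀ j (a : ℕ), P {ω | X j ω = a} = P {ω | X 0 ω = a} := by
    intro j a
    have := (hident j).measure_mem_eq (s := {a}) (measurableSet_singleton a)
    simpa [Set.preimage, Set.mem_singleton_iff] using this
  calc ∏ j ∈ Finset.range n, P (X j ⁻¹' s j)
      = ∏ j ∈ Finset.range n, P {ω | X 0 ω = y ((j : Fin n) - r)} := by
        refine Finset.prod_congr rfl fun j _ => ?_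
        rw [hfac j, hid j]
    _ = ∏ i : Fin n, P {ω | X 0 ω = y ((i : Fin n) - r)} := by
        rw [← Fin.prod_univ_eq_prod_range (fun j => P {ω | X 0 ω = y ((j : Fin n) - r)}) n]
        refine Finset.prod_congr rfl fun i _ => ?_
        rw [Fin.cast_val_eq_self]
    _ = ∏ i : Fin n, P {ω | X 0 ω = y i} := by
        exact Equiv.prod_comp (Equiv.subRight r) (fun i => P {ω | X 0 ω = y i})

lemma rot_event_prob (hmeas : ∀ j, Measurable (X j))
    (hiid : iIndepFun X P)
    (hident : ∀ j, IdentDistrib (X j) (X 0) P P)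
    {n : ℕ} [NeZero n] (r : Fin n) (G : Set (Fin n → ℕ)) :
    P {ω | (fun i : Fin n => X ((r + i : Fin n) : ℕ) ω) ∈ G}
      = ∑' y : G, ∏ i : Fin n, P {ω | X 0 ω = y.val i} := by
  classical
  have hset : {ω | (fun i : Fin n => X ((r + i : Fin n) : ℕ) ω) ∈ G}
      = ⋃ y ∈ G, {ω | ∀ i : Fin n, X ((r + i : Fin n) : ℕ) ω = y i} := by
    ext ω
    simp only [Set.mem_setOf_eq, Set.mem_iUnion]
    constructor
    · intro h; exact ⟨_, h, fun i => rfl⟩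
    · rintro ⟨y, hy, h⟩
      have : (fun i : Fin n => X ((r + i : Fin n) : ℕ) ω) = y := funext h
      rwa [this]
  rw [hset, measure_biUnion G.to_countable ?_ (fun y _ => cylinder_meas X hmeas _ y)]
  · exact tsum_congr fun y => cylinder_prob P X hmeas hiid hident r y.val
  · intro y hy y' hy' hne
    refine Set.disjoint_left.2 fun ω h h' => hne ?_
    funext i
    rw [← h i, ← h' i]
end PartA

open Finset MeasureTheory ProbabilityTheory
open scoped ENNReal

section PartAmain
variable {Ω : Type*} [MeasurableSpace Ω] {P : Measure Ω} [IsProbabilityMeasure P]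
  {X : ℕ → Ω → ℕ}

lemma fin_add_val' {n : ℕ} [NeZero n] (r : Fin n) (j : ℕ) :
    ((r + (j : Fin n) : Fin n) : ℕ) = (r.val + j) % n := by
  simp [Fin.add_def, Fin.val_natCast, Nat.add_mod]

lemma partA (hmeas : ∀ j, Measurable (X j))
    (hiid : iIndepFun X P)
    (hident : ∀ j, IdentDistrib (X j) (X 0) P P)
    {n : ℕ} (hn : 1 ≤ n) :
    (n : ℝ≥0∞) * P {ω | sInf {m : ℕ | 1 ≤ m ∧ ∑ j ∈ Finset.range m, X j ω = m - 1} = n}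
      ≤ P {ω | ∑ j ∈ Finset.range n, X j ω = n - 1} := by
  classical
  haveI : NeZero n := ⟨by omega⟩
  set G₀ : Set (Fin n → ℕ) :=
    {y | (∀ m, 1 ≤ m → m < n → ∑ j ∈ Finset.range m, y (j : Fin n) ≠ m - 1)
      ∧ ∑ i : Fin n, y i = n - 1} with hG₀
  set A : Fin n → Set Ω :=
    fun r => {ω | (fun i : Fin n => X ((r + i : Fin n) : ℕ) ω) ∈ G₀} with hA
  -- membership translation
  have htrans : ∀ (ω : Ω) (r : Fin n), ω ∈ A r ↔
      ((∀ m, 1 ≤ m → m < n → ∑ j ∈ Finset.range m, X ((r.val + j) % n) ω ≠ m - 1)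
        ∧ ∑ j ∈ Finset.range n, X j ω = n - 1) := by
    intro ω r
    simp only [hA, hG₀, Set.mem_setOf_eq]
    constructor
    · rintro ⟨h1, h2⟩
      constructor
      · intro m hm1 hm2 hcon
        refine h1 m hm1 hm2 ?_
        calc ∑ j ∈ Finset.range m, X (((r + (j : Fin n) : Fin n)) : ℕ) ω
            = ∑ j ∈ Finset.range m, X ((r.val + j) % n) ω :=
              Finset.sum_congr rfl fun j _ => by rw [fin_add_val']
          _ = m - 1 := hcon
      · calc ∑ j ∈ Finset.range n, X j ω
            = ∑ i : Fin n, X (i : ℕ) ω := (Fin.sum_univ_eq_sum_range (fun j => X j ω) n).symm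
          _ = ∑ i : Fin n, X (((r + i : Fin n)) : ℕ) ω :=
              (Equiv.sum_comp (Equiv.addLeft r) (fun i : Fin n => X (i : ℕ) ω)).symm
          _ = n - 1 := h2
    · rintro ⟨h1, h2⟩
      constructor
      · intro m hm1 hm2 hcon
        refine h1 m hm1 hm2 ?_
        calc ∑ j ∈ Finset.range m, X ((r.val + j) % n) ω
            = ∑ j ∈ Finset.range m, X (((r + (j : Fin n) : Fin n)) : ℕ) ω :=
              Finset.sum_congr rfl fun j _ => by rw [fin_add_val']
          _ = m - 1 := hcon
      · calc ∑ i : Fin n, X (((r + i : Fin n)) : ℕ) ω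
            = ∑ i : Fin n, X (i : ℕ) ω :=
              Equiv.sum_comp (Equiv.addLeft r) (fun i : Fin n => X (i : ℕ) ω)
          _ = ∑ j ∈ Finset.range n, X j ω := Fin.sum_univ_eq_sum_range (fun j => X j ω) n
          _ = n - 1 := h2
  -- `{S = n} ⊆ A 0`
  have hSsub : {ω | sInf {m : ℕ | 1 ≤ m ∧ ∑ j ∈ Finset.range m, X j ω = m - 1} = n} ⊆ A 0 := by
    intro ω hω
    simp only [Set.mem_setOf_eq] at hω
    set T := {m : ℕ | 1 ≤ m ∧ ∑ j ∈ Finset.range m, X j ω = m - 1} with hT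
    have hTne : T.Nonempty := by
      by_contra hc
      rw [Set.not_nonempty_iff_eq_empty] at hc
      rw [hc, Nat.sInf_empty] at hω
      omega
    have hnT : n ∈ T := by rw [← hω]; exact Nat.sInf_mem hTne
    rw [htrans ω 0]
    refine ⟨?_, hnT.2⟩
    intro m hm1 hm2 hcon
    have hmT : m ∈ T := by
      refine ⟨hm1, ?_⟩
      calc ∑ j ∈ Finset.range m, X j ω
          = ∑ j ∈ Finset.range m, X (((0 : Fin n).val + j) % n) ω :=
            Finset.sum_congr rfl fun j hj => by
              rw [Finset.mem_range] at hj
              congr 1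
              simp [Nat.mod_eq_of_lt (by omega : j < n)]
        _ = m - 1 := hcon
    have := Nat.sInf_le hmT
    omega
  -- disjointness
  have hdisj : ∀ r r' : Fin n, r ≠ r' → Disjoint (A r) (A r') := by
    intro r r' hne
    refine Set.disjoint_left.2 fun ω h h' => hne ?_
    rw [htrans ω r] at h
    rw [htrans ω r'] at h'
    set x : ℕ → ℕ := fun j => X (j % n) ω with hx
    have hper : ∀ j, x (j + n) = x j := fun j => by simp [hx, Nat.add_mod_right]
    have hsum : ∑ j ∈ Finset.range n, x j = n - 1 := by
      calc ∑ j ∈ Finset.range n, x j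
          = ∑ j ∈ Finset.range n, X j ω := Finset.sum_congr rfl fun j hj => by
            rw [Finset.mem_range] at hj
            simp [hx, Nat.mod_eq_of_lt hj]
        _ = n - 1 := h.2
    have := cycle_unique hn hper hsum r.isLt r'.isLt (fun m hm1 hm2 => h.1 m hm1 hm2)
      (fun m hm1 hm2 => h'.1 m hm1 hm2)
    exact Fin.val_injective this
  -- all A r have the same measure
  have hPeq : ∀ r : Fin n, P (A r) = P (A 0) := by
    intro r
    rw [hA]
    rw [rot_event_prob P X hmeas hiid hident r G₀, rot_event_prob P X hmeas hiid hident 0 G₀]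
  -- measurability
  have hmeasA : ∀ r : Fin n, MeasurableSet (A r) := by
    intro r
    have : A r = ⋃ y ∈ G₀, {ω | ∀ i : Fin n, X ((r + i : Fin n) : ℕ) ω = y i} := by
      ext ω
      simp only [hA, Set.mem_setOf_eq, Set.mem_iUnion]
      constructor
      · intro h; exact ⟨_, h, fun i => rfl⟩
      · rintro ⟨y, hy, h⟩
        have : (fun i : Fin n => X ((r + i : Fin n) : ℕ) ω) = y := funext h
        rwa [this]
    rw [this]
    exact MeasurableSet.biUnion G₀.to_countable fun y _ => cylinder_meas X hmeas _ y
  -- each A r is inside the total-sum event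
  have hsub : ∀ r : Fin n, A r ⊆ {ω | ∑ j ∈ Finset.range n, X j ω = n - 1} := by
    intro r ω h
    exact ((htrans ω r).1 h).2
  calc (n : ℝ≥0∞) * P {ω | sInf {m : ℕ | 1 ≤ m ∧ ∑ j ∈ Finset.range m, X j ω = m - 1} = n}
      ≤ (n : ℝ≥0∞) * P (A 0) := mul_le_mul_right (measure_mono hSsub) _
    _ = ∑ r : Fin n, P (A r) := by
        rw [Finset.sum_congr rfl (fun r _ => hPeq r)]
        simp [Finset.card_univ, mul_comm]
    _ = P (⋃ r ∈ (Finset.univ : Finset (Fin n)), A r) := by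
        rw [measure_biUnion_finset ?_ (fun r _ => hmeasA r)]
        intro r _ r' _ hne
        exact hdisj r r' hne
    _ ≤ P {ω | ∑ j ∈ Finset.range n, X j ω = n - 1} := by
        refine measure_mono ?_
        intro ω hω
        simp only [Set.mem_iUnion] at hω
        obtain ⟨r, _, h⟩ := hω
        exact hsub r h
end PartAmain

open Finset MeasureTheory ProbabilityTheory
open scoped ENNReal

section PartB
variable {Ω : Type*} [MeasurableSpace Ω] {P : Measure Ω} [IsProbabilityMeasure P]
  {X : ℕ → Ω → ℕ}

lemma tsum_atom_eq_one (hmeas0 : Measurable (X 0)) :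
    ∑' k : ℕ, P {ω | X 0 ω = k} = 1 := by
  have hpre : ∀ k : ℕ, {ω | X 0 ω = k} = X 0 ⁻¹' {k} := fun k => by ext ω; simp
  simp_rw [hpre]
  rw [← measure_iUnion (fun k k' hne => ?_) (fun k => hmeas0 (measurableSet_singleton k))]
  · have : ⋃ k : ℕ, X 0 ⁻¹' {k} = Set.univ := by
      ext ω; simp
    rw [this, measure_univ]
  · refine Set.disjoint_left.2 fun ω h h' => hne ?_
    simp only [Set.mem_preimage, Set.mem_singleton_iff] at h h'
    rw [← h, ← h']

lemma exists_two_atoms (hmeas0 : Measurable (X 0))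
    (hcrit : ∫⁻ ω, (X 0 ω : ℝ≥0∞) ∂P = 1)
    (hnondeg : ¬ (∀ᵐ ω ∂P, X 0 ω = 1)) :
    ∃ u v : ℕ, u < v ∧ 0 < P {ω | X 0 ω = u} ∧ 0 < P {ω | X 0 ω = v} := by
  by_contra hcon
  push_neg at hcon
  -- at most one atom; get the atom with full mass
  have htot := tsum_atom_eq_one (P := P) hmeas0
  have hex : ∃ u : ℕ, 0 < P {ω | X 0 ω = u} := by
    by_contra h
    push_neg at h
    simp only [le_zero_iff] at h
    rw [tsum_congr h] at htot
    simp at htot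
  obtain ⟨u, hu⟩ := hex
  have hzero : ∀ k, k ≠ u → P {ω | X 0 ω = k} = 0 := by
    intro k hk
    rcases lt_or_gt_of_ne hk with h | h
    · by_contra h0
      exact absurd (hcon k u h (pos_iff_ne_zero.2 h0)) (not_le.2 hu)
    · exact le_antisymm (hcon u k h hu) zero_le
  have hone : P {ω | X 0 ω = u} = 1 := by
    rw [tsum_eq_single u (fun k hk => hzero k hk)] at htot
    exact htot
  have hae : ∀ᵐ ω ∂P, X 0 ω = u := by
    rw [ae_iff]
    have hcompl : {ω | ¬ X 0 ω = u} = {ω | X 0 ω = u}ᶜ := rfl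
    have hms : MeasurableSet {ω | X 0 ω = u} := by
      have : {ω | X 0 ω = u} = X 0 ⁻¹' {u} := by ext ω; simp
      rw [this]; exact hmeas0 (measurableSet_singleton u)
    rw [hcompl, measure_compl hms (measure_ne_top _ _), hone, measure_univ, tsub_self]
  have hlint : ∫⁻ ω, (X 0 ω : ℝ≥0∞) ∂P = u := by
    calc ∫⁻ ω, (X 0 ω : ℝ≥0∞) ∂P = ∫⁻ _, (u : ℝ≥0∞) ∂P :=
          lintegral_congr_ae (hae.mono fun ω h => by simp [h])
      _ = u := by simp
  rw [hlint] at hcrit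
  have : u = 1 := by exact_mod_cast hcrit
  rw [this] at hae
  exact hnondeg hae

lemma sum_meas (hmeas : ∀ j, Measurable (X j)) (n : ℕ) :
    Measurable fun ω => ∑ j ∈ Finset.range n, X j ω :=
  Finset.measurable_sum _ fun j _ => hmeas j

lemma tsum_q_eq_one (hmeas : ∀ j, Measurable (X j)) (n : ℕ) :
    ∑' k : ℕ, P {ω | ∑ j ∈ Finset.range n, X j ω = k} = 1 := by
  have hpre : ∀ k : ℕ, {ω | ∑ j ∈ Finset.range n, X j ω = k}
      = (fun ω => ∑ j ∈ Finset.range n, X j ω) ⁻¹' {k} := fun k => by ext ω; simp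
  simp_rw [hpre]
  rw [← measure_iUnion (fun k k' hne => ?_)
    (fun k => sum_meas hmeas n (measurableSet_singleton k))]
  · have : ⋃ k : ℕ, (fun ω => ∑ j ∈ Finset.range n, X j ω) ⁻¹' {k} = Set.univ := by
      ext ω; simp
    rw [this, measure_univ]
  · refine Set.disjoint_left.2 fun ω h h' => hne ?_
    simp only [Set.mem_preimage, Set.mem_singleton_iff] at h h'
    rw [← h, ← h']

lemma q_rec (hmeas : ∀ j, Measurable (X j))
    (hiid : iIndepFun X P)
    (hident : ∀ j, IdentDistrib (X j) (X 0) P P) (n k : ℕ) :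
    P {ω | ∑ j ∈ Finset.range (n + 1), X j ω = k}
      = ∑ ij ∈ Finset.HasAntidiagonal.antidiagonal k,
          P {ω | ∑ j ∈ Finset.range n, X j ω = ij.1} * P {ω | X 0 ω = ij.2} := by
  classical
  have hset : {ω | ∑ j ∈ Finset.range (n + 1), X j ω = k}
      = ⋃ ij ∈ Finset.HasAntidiagonal.antidiagonal k,
          ({ω | ∑ j ∈ Finset.range n, X j ω = ij.1} ∩ {ω | X n ω = ij.2}) := by
    ext ω
    simp only [Set.mem_setOf_eq, Set.mem_iUnion, Set.mem_inter_iff, Finset.HasAntidiagonal.mem_antidiagonal,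
      Finset.sum_range_succ]
    constructor
    · intro h
      exact ⟨(∑ j ∈ Finset.range n, X j ω, X n ω), h, rfl, rfl⟩
    · rintro ⟨ij, hij, h1, h2⟩
      rw [h1, h2, hij]
  rw [hset, measure_biUnion_finset ?_ ?_]
  · refine Finset.sum_congr rfl fun ij _ => ?_
    have hInd : IndepFun (∑ j ∈ Finset.range n, X j) (X n) P :=
      hiid.indepFun_finsetSum_of_notMem hmeas Finset.notMem_range_self
    have h1 : {ω | ∑ j ∈ Finset.range n, X j ω = ij.1}
        = (∑ j ∈ Finset.range n, X j) ⁻¹' {ij.1} := by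
      ext ω; simp [Finset.sum_apply]
    have h2 : {ω | X n ω = ij.2} = (X n) ⁻¹' {ij.2} := by
      ext ω; simp
    rw [h1, h2, hInd.measure_inter_preimage_eq_mul _ _ (measurableSet_singleton _)
      (measurableSet_singleton _), ← h1, ← h2]
    congr 1
    have := (hident n).measure_mem_eq (s := {ij.2}) (measurableSet_singleton ij.2)
    simpa [Set.preimage, Set.mem_singleton_iff] using this
  · intro ij _ ij' _ hne
    refine Set.disjoint_left.2 fun ω h h' => hne ?_
    simp only [Set.mem_inter_iff, Set.mem_setOf_eq] at h h'
    have := Prod.ext_iff.2 ⟨h.1.symm.trans h'.1, h.2.symm.trans h'.2⟩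
    exact this
  · intro ij _
    exact ((sum_meas hmeas n) (measurableSet_singleton _)).inter
      ((hmeas n) (measurableSet_singleton _))
end PartB

open Finset MeasureTheory Real
open scoped ENNReal

section Fourier

noncomputable def phiF (pr : ℕ → ℝ) (t : ℝ) : ℂ :=
  ∑' k : ℕ, (pr k : ℂ) * Complex.exp ((k : ℂ) * t * Complex.I)

lemma norm_term (a : ℝ) (ha : 0 ≤ a) (m : ℕ) (t : ℝ) :
    ‖(a : ℂ) * Complex.exp ((m : ℂ) * t * Complex.I)‖ = a := by
  rw [norm_mul, Complex.norm_exp]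
  simp [ha, abs_of_nonneg]

lemma summable_term {pr : ℕ → ℝ} (hs : Summable pr) (hnn : ∀ k, 0 ≤ pr k) (t : ℝ) :
    Summable fun k : ℕ => (pr k : ℂ) * Complex.exp ((k : ℂ) * t * Complex.I) := by
  refine Summable.of_norm ?_
  simpa only [norm_term _ (hnn _)] using hs

lemma char_pow {pr : ℕ → ℝ} {q : ℕ → ℕ → ℝ}
    (hprs : Summable pr) (hprnn : ∀ k, 0 ≤ pr k)
    (hqs : ∀ n, Summable (q n)) (hqnn : ∀ n k, 0 ≤ q n k)
    (hq0 : ∀ k, q 0 k = if k = 0 then 1 else 0)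
    (hrec : ∀ n k, q (n + 1) k = ∑ ij ∈ Finset.HasAntidiagonal.antidiagonal k, q n ij.1 * pr ij.2) :
    ∀ (n : ℕ) (t : ℝ),
      ∑' k : ℕ, (q n k : ℂ) * Complex.exp ((k : ℂ) * t * Complex.I) = (phiF pr t) ^ n := by
  intro n
  induction n with
  | zero =>
    intro t
    rw [pow_zero]
    rw [tsum_eq_single 0 (fun k hk => by simp [hq0 k, hk])]
    simp [hq0 0]
  | succ n ih =>
    intro t
    have hnormq : Summable fun k => ‖(q n k : ℂ) * Complex.exp ((k : ℂ) * t * Complex.I)‖ := by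
      simpa only [norm_term _ (hqnn n _)] using hqs n
    have hnormp : Summable fun k => ‖(pr k : ℂ) * Complex.exp ((k : ℂ) * t * Complex.I)‖ := by
      simpa only [norm_term _ (hprnn _)] using hprs
    have hC := tsum_mul_tsum_eq_tsum_sum_antidiagonal_of_summable_norm hnormq hnormp
    rw [pow_succ, ← ih t]
    have hphi : phiF pr t = ∑' k : ℕ, (pr k : ℂ) * Complex.exp ((k : ℂ) * t * Complex.I) := rfl
    rw [hphi, hC]
    refine tsum_congr fun k => ?_
    rw [hrec n k, Complex.ofReal_sum]
    rw [Finset.sum_mul]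
    refine Finset.sum_congr rfl fun ij hij => ?_
    rw [Finset.HasAntidiagonal.mem_antidiagonal] at hij
    have : ((ij.1 + ij.2 : ℕ) : ℂ) * t * Complex.I
        = (ij.1 : ℂ) * t * Complex.I + (ij.2 : ℂ) * t * Complex.I := by
      push_cast; ring
    rw [← hij]
    rw [this, Complex.exp_add]
    push_cast
    ring

lemma exp_int_pi_sub (r : ℤ) :
    Complex.exp ((r : ℂ) * Real.pi * Complex.I)
      = Complex.exp ((r : ℂ) * (-Real.pi) * Complex.I) := by
  have h1 : ((r : ℂ) * Real.pi * Complex.I) = (r : ℤ) * (Real.pi * Complex.I) := by push_cast; ring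
  have h2 : ((r : ℂ) * (-Real.pi) * Complex.I) = (-r : ℤ) * (Real.pi * Complex.I) := by
    push_cast; ring
  rw [h1, h2, Complex.exp_int_mul, Complex.exp_int_mul]
  rw [Complex.exp_pi_mul_I]
  rw [zpow_neg]
  refine (inv_eq_of_mul_eq_one_right ?_).symm
  rw [← zpow_add₀ (by norm_num : (-1 : ℂ) ≠ 0)]
  have : r + r = 2 * r := by ring
  rw [this, zpow_mul]
  norm_num

lemma orthogonality (m k : ℕ) (hmk : m ≠ k) :
    (∫ t in (-Real.pi)..Real.pi,
      Complex.exp ((m : ℂ) * t * Complex.I) * Complex.exp (-((k : ℂ) * t * Complex.I))) = 0 := by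
  have hc : ((m : ℂ) - k) * Complex.I ≠ 0 := by
    refine mul_ne_zero ?_ Complex.I_ne_zero
    intro h
    apply hmk
    have : (m : ℂ) = k := by linear_combination h
    exact_mod_cast this
  have hre : ∀ t : ℝ, Complex.exp ((m : ℂ) * t * Complex.I) * Complex.exp (-((k : ℂ) * t * Complex.I))
      = Complex.exp ((((m : ℂ) - k) * Complex.I) * t) := by
    intro t
    rw [← Complex.exp_add]
    congr 1
    ring
  rw [intervalIntegral.integral_congr (fun t _ => hre t)]
  rw [integral_exp_mul_complex hc]
  rw [div_eq_zero_iff]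
  left
  have h1 : (((m : ℂ) - k) * Complex.I) * (Real.pi : ℂ) = ((m : ℤ) - k : ℤ) * Real.pi * Complex.I := by
    push_cast; ring
  have h2 : (((m : ℂ) - k) * Complex.I) * ((-Real.pi : ℝ) : ℂ)
      = ((m : ℤ) - k : ℤ) * (-Real.pi) * Complex.I := by
    push_cast; ring
  rw [h1, h2, exp_int_pi_sub]
  ring
end Fourier

open Finset MeasureTheory Real
open scoped ENNReal

section Inversion
variable {pr : ℕ → ℝ} {q : ℕ → ℕ → ℝ}

lemma continuous_phiF (hprs : Summable pr) (hprnn : ∀ k, 0 ≤ pr k) :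
    Continuous (phiF pr) := by
  refine continuous_tsum (fun k => ?_) hprs (fun k t => ?_)
  · fun_prop
  · rw [norm_term _ (hprnn k)]

lemma inversion
    (hprs : Summable pr) (hprnn : ∀ k, 0 ≤ pr k)
    (hqs : ∀ n, Summable (q n)) (hqnn : ∀ n k, 0 ≤ q n k)
    (hq0 : ∀ k, q 0 k = if k = 0 then 1 else 0)
    (hrec : ∀ n k, q (n + 1) k = ∑ ij ∈ Finset.HasAntidiagonal.antidiagonal k, q n ij.1 * pr ij.2)
    (n k : ℕ) :
    q n k * (2 * Real.pi) ≤ ∫ t in (-Real.pi)..Real.pi, ‖phiF pr t‖ ^ n := by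
  have hle : (-Real.pi) ≤ Real.pi := by linarith [Real.pi_pos]
  set f : ℕ → ℝ → ℂ := fun m t =>
    (q n m : ℂ) * Complex.exp ((m : ℂ) * t * Complex.I) * Complex.exp (-((k : ℂ) * t * Complex.I))
    with hf
  have hnormf : ∀ m t, ‖f m t‖ = q n m := by
    intro m t
    rw [hf]
    simp only [norm_mul]
    rw [show ‖(q n m : ℂ)‖ * ‖Complex.exp ((m : ℂ) * t * Complex.I)‖ = q n m from by
      simpa [norm_mul] using norm_term (q n m) (hqnn n m) m t]
    rw [Complex.norm_exp]
    simp
  -- step 1: the inversion identity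
  have h1 : (∫ t in (-Real.pi)..Real.pi,
      (phiF pr t) ^ n * Complex.exp (-((k : ℂ) * t * Complex.I))) = (q n k : ℂ) * (2 * Real.pi) := by
    have hint : ∀ t : ℝ, (phiF pr t) ^ n * Complex.exp (-((k : ℂ) * t * Complex.I))
        = ∑' m : ℕ, f m t := by
      intro t
      rw [← char_pow hprs hprnn hqs hqnn hq0 hrec n t]
      rw [hf]
      exact (tsum_mul_right).symm
    rw [intervalIntegral.integral_congr (fun t _ => hint t)]
    rw [intervalIntegral.integral_of_le hle]
    rw [MeasureTheory.integral_tsum (fun m => Continuous.aestronglyMeasurable (by fun_prop)) ?_]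
    · have heach : ∀ m : ℕ, (∫ t in Set.Ioc (-Real.pi) Real.pi, f m t)
          = if m = k then (q n k : ℂ) * (2 * Real.pi) else 0 := by
        intro m
        rw [← intervalIntegral.integral_of_le hle]
        by_cases hmk : m = k
        · subst hmk
          simp only [if_pos rfl]
          have : ∀ t : ℝ, f m t = (q n m : ℂ) := by
            intro t
            simp only [hf]
            rw [mul_assoc, ← Complex.exp_add]
            simp
          rw [intervalIntegral.integral_congr (fun t _ => this t)]
          rw [intervalIntegral.integral_const]
          rw [sub_neg_eq_add, Complex.real_smul]
          push_cast
          ring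
        · simp only [if_neg hmk]
          have : ∀ t : ℝ, f m t = (q n m : ℂ) *
              (Complex.exp ((m : ℂ) * t * Complex.I) * Complex.exp (-((k : ℂ) * t * Complex.I))) := by
            intro t; simp only [hf]; ring
          rw [intervalIntegral.integral_congr (fun t _ => this t)]
          rw [intervalIntegral.integral_const_mul, orthogonality m k hmk, mul_zero]
      rw [tsum_congr heach, tsum_eq_single k (fun m hm => by rw [if_neg hm])]
      rw [if_pos rfl]
    · -- summability of the lintegrals
      have hband : ∀ m : ℕ, (∫⁻ t in Set.Ioc (-Real.pi) Real.pi, ‖f m t‖ₑ ∂volume)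
          = ENNReal.ofReal (q n m) * ENNReal.ofReal (2 * Real.pi) := by
        intro m
        have hc : ∀ t : ℝ, ‖f m t‖ₑ = ENNReal.ofReal (q n m) := by
          intro t
          rw [← ofReal_norm, hnormf m t]
        calc ∫⁻ t in Set.Ioc (-Real.pi) Real.pi, ‖f m t‖ₑ ∂volume
            = ∫⁻ _ in Set.Ioc (-Real.pi) Real.pi, ENNReal.ofReal (q n m) ∂volume :=
              lintegral_congr fun t => hc t
          _ = ENNReal.ofReal (q n m) * volume (Set.Ioc (-Real.pi) Real.pi) := by
              rw [MeasureTheory.lintegral_const,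
                Measure.restrict_apply MeasurableSet.univ, Set.univ_inter]
          _ = ENNReal.ofReal (q n m) * ENNReal.ofReal (2 * Real.pi) := by
              rw [Real.volume_Ioc]
              congr 1
              ring
      rw [tsum_congr hband, ENNReal.tsum_mul_right]
      refine ENNReal.mul_ne_top ?_ ENNReal.ofReal_ne_top
      rw [← ENNReal.ofReal_tsum_of_nonneg (hqnn n) (hqs n)]
      exact ENNReal.ofReal_ne_top
  -- step 2: bound
  calc q n k * (2 * Real.pi)
      = ‖(q n k : ℂ) * (2 * Real.pi)‖ := by
        have hcast : (q n k : ℂ) * (2 * Real.pi) = ((q n k * (2 * Real.pi) : ℝ) : ℂ) := by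
          push_cast; ring
        rw [hcast, Complex.norm_real, Real.norm_eq_abs, abs_of_nonneg]
        exact mul_nonneg (hqnn n k) (by positivity)
    _ = ‖∫ t in (-Real.pi)..Real.pi, (phiF pr t) ^ n * Complex.exp (-((k : ℂ) * t * Complex.I))‖ := by
        rw [h1]
    _ ≤ ∫ t in (-Real.pi)..Real.pi, ‖(phiF pr t) ^ n * Complex.exp (-((k : ℂ) * t * Complex.I))‖ :=
        intervalIntegral.norm_integral_le_integral_norm hle
    _ = ∫ t in (-Real.pi)..Real.pi, ‖phiF pr t‖ ^ n := by
        refine intervalIntegral.integral_congr fun t _ => ?_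
        rw [norm_mul, norm_pow]
        rw [Complex.norm_exp]
        simp
end Inversion

open Finset MeasureTheory Real
open scoped ENNReal

section PhiBound

lemma sqrt_quad_bound {s w : ℝ} (hw : 0 ≤ w) (hws : w ≤ s ^ 2) (hs : 0 < s) (hs1 : s ≤ 1) :
    Real.sqrt (s ^ 2 - w) ≤ s - w / 2 := by
  calc Real.sqrt (s ^ 2 - w) ≤ Real.sqrt ((s - w / 2) ^ 2) := by
        refine Real.sqrt_le_sqrt ?_
        nlinarith
    _ = s - w / 2 := Real.sqrt_sq (by nlinarith)

lemma phiF_bound {pr : ℕ → ℝ} (hprs : Summable pr) (hprnn : ∀ k, 0 ≤ pr k)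
    (htot : ∑' k, pr k = 1) {u v : ℕ} (huv : u < v) (hu : 0 < pr u) (hv : 0 < pr v) (t : ℝ) :
    ‖phiF pr t‖ ≤ 1 - (pr u * pr v) * (1 - Real.cos (((v - u : ℕ) : ℝ) * t)) := by
  classical
  set c : ℕ → ℂ := fun k => (pr k : ℂ) * Complex.exp ((k : ℂ) * t * Complex.I) with hc
  have hsc : Summable c := summable_term hprs hprnn t
  set c' : ℕ → ℂ := fun k => if k = u then 0 else c k with hc'
  have hsc' : Summable c' := by
    refine Summable.of_norm (Summable.of_nonneg_of_le (fun k => norm_nonneg _) (fun k => ?_) hprs)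
    by_cases h : k = u
    · simp [hc', h, hprnn u]
    · simp only [hc', if_neg h]
      rw [hc, norm_term _ (hprnn k)]
  have h1 : ∑' k, c k = c u + ∑' k, c' k := hsc.tsum_eq_add_tsum_ite u
  have h2 : ∑' k, c' k = c v + ∑' k, (if k = v then 0 else c' k) := by
    have := hsc'.tsum_eq_add_tsum_ite v
    rwa [show c' v = c v from by rw [hc']; simp [Ne.symm (Nat.ne_of_lt huv)]] at this
  set R : ℂ := ∑' k, (if k = v then 0 else c' k) with hR
  -- bound on the remainder
  have hprs' : Summable fun k => if k = u then 0 else pr k := by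
    refine Summable.of_nonneg_of_le (fun k => ?_) (fun k => ?_) hprs
    · by_cases h : k = u <;> simp [h, hprnn k]
    · by_cases h : k = u <;> simp [h, hprnn u]
  have hRb : ‖R‖ ≤ 1 - pr u - pr v := by
    have hnorm : ∀ k, ‖if k = v then 0 else c' k‖ = (if k = v then 0 else if k = u then 0 else pr k) := by
      intro k
      by_cases h : k = v
      · simp [h]
      · by_cases h' : k = u
        · simp [h, h', hc']
        · simp only [if_neg h, if_neg h', hc', hc]
          rw [norm_term _ (hprnn k)]
    have hsum2 : Summable fun k => if k = v then 0 else if k = u then 0 else pr k := by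
      refine Summable.of_nonneg_of_le (fun k => ?_) (fun k => ?_) hprs
      · by_cases h : k = v <;> by_cases h' : k = u <;> simp [h, h', hprnn k]
      · by_cases h : k = v <;> by_cases h' : k = u <;> simp [h, h', hprnn k, hprnn u, hprnn v]
    have hval : ∑' k, (if k = v then 0 else if k = u then 0 else pr k) = 1 - pr u - pr v := by
      have e1 : ∑' k, pr k = pr u + ∑' k, (if k = u then 0 else pr k) := hprs.tsum_eq_add_tsum_ite u
      have e2 : ∑' k, (if k = u then 0 else pr k)
          = pr v + ∑' k, (if k = v then 0 else if k = u then 0 else pr k) := by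
        have := hprs'.tsum_eq_add_tsum_ite v
        rwa [show (if v = u then 0 else pr v) = pr v from by
          simp [Ne.symm (Nat.ne_of_lt huv)]] at this
      rw [htot] at e1
      linarith
    calc ‖R‖ ≤ ∑' k, ‖if k = v then 0 else c' k‖ := by
          refine norm_tsum_le_tsum_norm ?_
          simpa only [hnorm] using hsum2
      _ = 1 - pr u - pr v := by rw [tsum_congr hnorm, hval]
  -- the two-atom term
  set θ : ℝ := ((v - u : ℕ) : ℝ) * t with hθ
  have hcv : c u + c v = Complex.exp ((u : ℂ) * t * Complex.I) *
      ((pr u : ℂ) + (pr v : ℂ) * Complex.exp ((θ : ℝ) * Complex.I)) := by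
    rw [hc, hθ]
    rw [mul_add]
    congr 1
    · ring
    · rw [← mul_assoc, mul_comm (Complex.exp _) ((pr v : ℂ)), mul_assoc, ← Complex.exp_add]
      congr 2
      push_cast [Nat.cast_sub huv.le]
      ring
  have habs2 : ‖c u + c v‖ = ‖(pr u : ℂ) + (pr v : ℂ) * Complex.exp ((θ : ℝ) * Complex.I)‖ := by
    rw [hcv, norm_mul, Complex.norm_exp]
    simp
  have hz : (pr u : ℂ) + (pr v : ℂ) * Complex.exp ((θ : ℝ) * Complex.I)
      = ((pr u + pr v * Real.cos θ : ℝ) : ℂ) + ((pr v * Real.sin θ : ℝ) : ℂ) * Complex.I := by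
    rw [Complex.exp_mul_I]
    push_cast [Complex.ofReal_cos, Complex.ofReal_sin]
    ring
  have habs3 : ‖c u + c v‖ = Real.sqrt ((pr u + pr v * Real.cos θ) ^ 2 + (pr v * Real.sin θ) ^ 2) := by
    rw [habs2, hz, Complex.norm_add_mul_I]
  have hinner : (pr u + pr v * Real.cos θ) ^ 2 + (pr v * Real.sin θ) ^ 2
      = (pr u + pr v) ^ 2 - 2 * pr u * pr v * (1 - Real.cos θ) := by
    have hsin := Real.sin_sq θ
    linear_combination (pr v) ^ 2 * hsin
  have hs1 : pr u + pr v ≤ 1 := by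
    rw [← htot]
    have := Summable.sum_le_tsum ({u, v} : Finset ℕ) (fun k _ => hprnn k) hprs
    rwa [Finset.sum_pair (Nat.ne_of_lt huv)] at this
  have hwnn : 0 ≤ 2 * pr u * pr v * (1 - Real.cos θ) := by
    have h1 := Real.cos_le_one θ
    nlinarith [mul_pos hu hv]
  have hws : 2 * pr u * pr v * (1 - Real.cos θ) ≤ (pr u + pr v) ^ 2 := by
    have h1 := Real.neg_one_le_cos θ
    nlinarith [mul_pos hu hv, sq_nonneg (pr u - pr v)]
  have hcuv : ‖c u + c v‖ ≤ (pr u + pr v) - pr u * pr v * (1 - Real.cos θ) := by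
    rw [habs3, hinner]
    have := sqrt_quad_bound hwnn hws (by positivity) hs1
    calc Real.sqrt ((pr u + pr v) ^ 2 - 2 * pr u * pr v * (1 - Real.cos θ))
        ≤ (pr u + pr v) - 2 * pr u * pr v * (1 - Real.cos θ) / 2 := this
      _ = (pr u + pr v) - pr u * pr v * (1 - Real.cos θ) := by ring
  -- assemble
  have hphi : phiF pr t = (c u + c v) + R := by
    rw [phiF]
    have : ∑' k : ℕ, (pr k : ℂ) * Complex.exp ((k : ℂ) * t * Complex.I) = ∑' k, c k := rfl
    rw [this, h1, h2, hR]
    ring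
  calc ‖phiF pr t‖ ≤ ‖c u + c v‖ + ‖R‖ := by rw [hphi]; exact norm_add_le _ _
    _ ≤ ((pr u + pr v) - pr u * pr v * (1 - Real.cos θ)) + (1 - pr u - pr v) := by
        exact add_le_add hcuv hRb
    _ = 1 - (pr u * pr v) * (1 - Real.cos θ) := by ring
end PhiBound

open Finset MeasureTheory Real
open scoped ENNReal

section GaussEst

lemma one_sub_cos_ge {s : ℝ} (hs : |s| ≤ Real.pi) :
    2 * s ^ 2 / Real.pi ^ 2 ≤ 1 - Real.cos s := by
  have hpi := Real.pi_pos
  have hkey : ∀ x : ℝ, 0 ≤ x → x ≤ Real.pi → 2 * x ^ 2 / Real.pi ^ 2 ≤ 1 - Real.cos x := by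
    intro x hx0 hxpi
    have hhalf : Real.sin (x / 2) ^ 2 = 1 / 2 - Real.cos x / 2 := by
      have := Real.sin_sq_eq_half_sub (x / 2)
      rwa [show 2 * (x / 2) = x by ring] at this
    have hjord : 2 / Real.pi * (x / 2) ≤ Real.sin (x / 2) :=
      Real.mul_le_sin (by positivity) (by linarith)
    have hnn : (0 : ℝ) ≤ 2 / Real.pi * (x / 2) := by positivity
    have hsq : (2 / Real.pi * (x / 2)) ^ 2 ≤ Real.sin (x / 2) ^ 2 := by
      exact pow_le_pow_left₀ hnn hjord 2
    have hval : (2 / Real.pi * (x / 2)) ^ 2 = x ^ 2 / Real.pi ^ 2 := by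
      field_simp
    rw [hval, hhalf] at hsq
    have hgoal : 2 * x ^ 2 / Real.pi ^ 2 = 2 * (x ^ 2 / Real.pi ^ 2) := by ring
    rw [hgoal]
    linarith
  rcases le_or_gt 0 s with h | h
  · exact hkey s h (by rwa [abs_of_nonneg h] at hs)
  · have := hkey (-s) (by linarith) (by rwa [abs_of_neg h] at hs)
    rw [Real.cos_neg] at this
    rw [show (-s) ^ 2 = s ^ 2 by ring] at this
    linarith

lemma cos_pow_integral_bound {a : ℝ} (ha : 0 < a) (ha2 : a ≤ 1 / 2) {D : ℕ} (hD : 1 ≤ D)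
    {n : ℕ} (hn : 1 ≤ n) :
    ∫ t in (-Real.pi)..Real.pi, (1 - a * (1 - Real.cos ((D : ℝ) * t))) ^ n
      ≤ Real.sqrt (Real.pi ^ 3 / (2 * a)) / Real.sqrt n := by
  have hpi := Real.pi_pos
  have hDpos : (0 : ℝ) < D := by exact_mod_cast hD
  set h : ℝ → ℝ := fun s => Real.exp (-((n : ℝ) * a) * (1 - Real.cos s)) with hh
  have hhcont : Continuous h := by fun_prop
  have hbase : ∀ s : ℝ, 0 ≤ 1 - a * (1 - Real.cos s) := by
    intro s
    have h1 := Real.cos_le_one s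
    have h2 := Real.neg_one_le_cos s
    nlinarith
  -- pointwise: (1 - a(1-cos s))^n ≤ h s
  have hpw : ∀ s : ℝ, (1 - a * (1 - Real.cos s)) ^ n ≤ h s := by
    intro s
    have h1 : 1 - a * (1 - Real.cos s) ≤ Real.exp (-(a * (1 - Real.cos s))) := by
      have := Real.add_one_le_exp (-(a * (1 - Real.cos s)))
      linarith
    calc (1 - a * (1 - Real.cos s)) ^ n ≤ Real.exp (-(a * (1 - Real.cos s))) ^ n :=
          pow_le_pow_left₀ (hbase s) h1 n
      _ = h s := by
          rw [hh, ← Real.exp_nat_mul]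
          congr 1
          ring
  -- step 1: reduce to the integral of h ∘ (D * ·) then periodicity
  have hper : Function.Periodic h (2 * Real.pi) := by
    intro s
    simp only [hh]
    rw [Real.cos_add_two_pi]
  have hint : ∀ t₁ t₂ : ℝ, IntervalIntegrable h volume t₁ t₂ := fun t₁ t₂ =>
    hhcont.intervalIntegrable t₁ t₂
  have hstep1 : (∫ t in (-Real.pi)..Real.pi, h ((D : ℝ) * t))
      = ∫ s in (-Real.pi)..Real.pi, h s := by
    rw [intervalIntegral.integral_comp_mul_left h (ne_of_gt hDpos)]
    have e0 := hper.intervalIntegral_add_zsmul_eq (D : ℤ) (-((D : ℝ) * Real.pi)) hint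
    rw [show -((D : ℝ) * Real.pi) + (D : ℤ) • (2 * Real.pi) = (D : ℝ) * Real.pi by
      rw [zsmul_eq_mul]; push_cast; ring] at e0
    rw [show (D : ℝ) * (-Real.pi) = -((D : ℝ) * Real.pi) by ring]
    rw [e0, hper.intervalIntegral_add_eq (-((D : ℝ) * Real.pi)) (-Real.pi)]
    rw [show -Real.pi + 2 * Real.pi = Real.pi by ring]
    rw [zsmul_eq_mul, smul_eq_mul]
    rw [← mul_assoc]
    push_cast
    rw [inv_mul_cancel₀ (ne_of_gt hDpos), one_mul]
  -- step 2: gaussian comparison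
  set b : ℝ := 2 * ((n : ℝ) * a) / Real.pi ^ 2 with hb
  have hbpos : 0 < b := by
    have : (0 : ℝ) < n := by exact_mod_cast hn
    positivity
  have hstep2 : (∫ s in (-Real.pi)..Real.pi, h s)
      ≤ ∫ s in (-Real.pi)..Real.pi, Real.exp (-b * s ^ 2) := by
    refine intervalIntegral.integral_mono_on (by linarith) (hint _ _)
      ((by fun_prop : Continuous fun s : ℝ => Real.exp (-b * s ^ 2)).intervalIntegrable _ _) ?_
    intro s hs
    rw [Set.mem_Icc] at hs
    have habs : |s| ≤ Real.pi := abs_le.2 ⟨hs.1, hs.2⟩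
    have hge := one_sub_cos_ge habs
    have hna : (0 : ℝ) ≤ (n : ℝ) * a := by positivity
    rw [hh]
    refine Real.exp_le_exp.2 ?_
    rw [hb]
    have : 2 * ((n : ℝ) * a) / Real.pi ^ 2 * s ^ 2 = ((n : ℝ) * a) * (2 * s ^ 2 / Real.pi ^ 2) := by
      field_simp
    nlinarith
  have hstep3 : (∫ s in (-Real.pi)..Real.pi, Real.exp (-b * s ^ 2)) ≤ Real.sqrt (Real.pi / b) := by
    rw [intervalIntegral.integral_of_le (by linarith)]
    rw [← integral_gaussian b]
    exact setIntegral_le_integral (integrable_exp_neg_mul_sq hbpos)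
      (Filter.Eventually.of_forall fun s => (Real.exp_pos _).le)
  have hstep4 : Real.sqrt (Real.pi / b) = Real.sqrt (Real.pi ^ 3 / (2 * a)) / Real.sqrt n := by
    rw [← Real.sqrt_div (by positivity : (0:ℝ) ≤ Real.pi ^ 3 / (2 * a))]
    congr 1
    rw [hb]
    have hnpos : (0 : ℝ) < n := by exact_mod_cast hn
    field_simp
  calc ∫ t in (-Real.pi)..Real.pi, (1 - a * (1 - Real.cos ((D : ℝ) * t))) ^ n
      ≤ ∫ t in (-Real.pi)..Real.pi, h ((D : ℝ) * t) := by
        refine intervalIntegral.integral_mono_on (by linarith) ?_ ?_ (fun t _ => hpw _)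
        · exact ((by fun_prop : Continuous fun t : ℝ =>
            (1 - a * (1 - Real.cos ((D : ℝ) * t))) ^ n)).intervalIntegrable _ _
        · exact ((hhcont.comp (by fun_prop : Continuous fun t : ℝ => (D : ℝ) * t))).intervalIntegrable _ _
    _ = ∫ s in (-Real.pi)..Real.pi, h s := hstep1
    _ ≤ ∫ s in (-Real.pi)..Real.pi, Real.exp (-b * s ^ 2) := hstep2
    _ ≤ Real.sqrt (Real.pi / b) := hstep3
    _ = Real.sqrt (Real.pi ^ 3 / (2 * a)) / Real.sqrt n := by rw [hstep4]
end GaussEst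

open Finset MeasureTheory ProbabilityTheory Real
open scoped ENNReal

section PartBmain
variable {Ω : Type*} [MeasurableSpace Ω] {P : Measure Ω} [IsProbabilityMeasure P]
  {X : ℕ → Ω → ℕ}

lemma partB (hmeas : ∀ j, Measurable (X j))
    (hiid : iIndepFun X P)
    (hident : ∀ j, IdentDistrib (X j) (X 0) P P)
    (hcrit : ∫⁻ ω, (X 0 ω : ℝ≥0∞) ∂P = 1)
    (hnondeg : ¬ (∀ᵐ ω ∂P, X 0 ω = 1)) :
    ∃ K : ℝ, 0 < K ∧ ∀ n k : ℕ, 1 ≤ n →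
      P {ω | ∑ j ∈ Finset.range n, X j ω = k} ≤ ENNReal.ofReal (K / Real.sqrt n) := by
  classical
  obtain ⟨u, v, huv, hu, hv⟩ := exists_two_atoms (hmeas 0) hcrit hnondeg
  set pr : ℕ → ℝ := fun k => (P {ω | X 0 ω = k}).toReal with hpr
  set q : ℕ → ℕ → ℝ := fun n k => (P {ω | ∑ j ∈ Finset.range n, X j ω = k}).toReal with hq
  have hprnn : ∀ k, 0 ≤ pr k := fun k => ENNReal.toReal_nonneg
  have hqnn : ∀ n k, 0 ≤ q n k := fun n k => ENNReal.toReal_nonneg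
  have hprs : Summable pr := ENNReal.summable_toReal (by rw [tsum_atom_eq_one (hmeas 0)]; exact ENNReal.one_ne_top)
  have hprtot : ∑' k, pr k = 1 := by
    rw [hpr, ← ENNReal.tsum_toReal_eq (fun k => measure_ne_top _ _), tsum_atom_eq_one (hmeas 0)]
    simp
  have hqs : ∀ n, Summable (q n) := fun n =>
    ENNReal.summable_toReal (by rw [tsum_q_eq_one hmeas n]; exact ENNReal.one_ne_top)
  have hq0 : ∀ k, q 0 k = if k = 0 then 1 else 0 := by
    intro k
    by_cases hk : k = 0
    · subst hk
      have : {ω : Ω | ∑ j ∈ Finset.range 0, X j ω = 0} = Set.univ := by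
        ext ω; simp
      simp [hq, this]
    · have hset : {ω : Ω | ∑ j ∈ Finset.range 0, X j ω = k} = ∅ := by
        ext ω; simp [Ne.symm hk]
      have : q 0 k = (P {ω : Ω | ∑ j ∈ Finset.range 0, X j ω = k}).toReal := rfl
      rw [this, hset]
      simp [hk]
  have hrec : ∀ n k, q (n + 1) k = ∑ ij ∈ Finset.HasAntidiagonal.antidiagonal k, q n ij.1 * pr ij.2 := by
    intro n k
    have hqd : q (n + 1) k = (P {ω : Ω | ∑ j ∈ Finset.range (n + 1), X j ω = k}).toReal := rfl
    rw [hqd, q_rec hmeas hiid hident n k]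
    rw [ENNReal.toReal_sum (fun ij _ => ENNReal.mul_ne_top (measure_ne_top _ _) (measure_ne_top _ _))]
    refine Finset.sum_congr rfl fun ij _ => ?_
    rw [ENNReal.toReal_mul]
  have hu' : 0 < pr u := ENNReal.toReal_pos (ne_of_gt hu) (measure_ne_top _ _)
  have hv' : 0 < pr v := ENNReal.toReal_pos (ne_of_gt hv) (measure_ne_top _ _)
  set a : ℝ := pr u * pr v with ha
  have hapos : 0 < a := mul_pos hu' hv'
  have hs1 : pr u + pr v ≤ 1 := by
    rw [← hprtot]
    have := Summable.sum_le_tsum ({u, v} : Finset ℕ) (fun k _ => hprnn k) hprs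
    rwa [Finset.sum_pair (Nat.ne_of_lt huv)] at this
  have ha2 : a ≤ 1 / 2 := by nlinarith [sq_nonneg (pr u - pr v)]
  have hD : 1 ≤ v - u := by omega
  set K : ℝ := Real.sqrt (Real.pi ^ 3 / (2 * a)) / (2 * Real.pi) with hK
  have hpi := Real.pi_pos
  have hKpos : 0 < K := by
    rw [hK]
    have : 0 < Real.pi ^ 3 / (2 * a) := by positivity
    positivity
  refine ⟨K, hKpos, fun n k hn => ?_⟩
  -- real-valued bound
  have hreal : q n k ≤ K / Real.sqrt n := by
    have h1 := inversion hprs hprnn hqs hqnn hq0 hrec n k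
    have h2 : (∫ t in (-Real.pi)..Real.pi, ‖phiF pr t‖ ^ n)
        ≤ ∫ t in (-Real.pi)..Real.pi, (1 - a * (1 - Real.cos (((v - u : ℕ) : ℝ) * t))) ^ n := by
      refine intervalIntegral.integral_mono_on (by linarith) ?_ ?_ (fun t _ => ?_)
      · exact (((continuous_phiF hprs hprnn).norm.pow n)).intervalIntegrable _ _
      · exact ((by fun_prop : Continuous fun t : ℝ =>
          (1 - a * (1 - Real.cos (((v - u : ℕ) : ℝ) * t))) ^ n)).intervalIntegrable _ _
      · exact pow_le_pow_left₀ (norm_nonneg _) (phiF_bound hprs hprnn hprtot huv hu' hv' t) n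
    have h3 := cos_pow_integral_bound hapos ha2 hD hn
    have h4 : q n k * (2 * Real.pi) ≤ Real.sqrt (Real.pi ^ 3 / (2 * a)) / Real.sqrt n := by
      calc q n k * (2 * Real.pi) ≤ ∫ t in (-Real.pi)..Real.pi, ‖phiF pr t‖ ^ n := h1
        _ ≤ _ := h2.trans h3
    rw [hK]
    rw [div_div]
    rw [le_div_iff₀ (by positivity : (0:ℝ) < 2 * Real.pi * Real.sqrt n)]
    calc q n k * (2 * Real.pi * Real.sqrt n) = q n k * (2 * Real.pi) * Real.sqrt n := by ring
      _ ≤ Real.sqrt (Real.pi ^ 3 / (2 * a)) / Real.sqrt n * Real.sqrt n := by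
          have hsn : (0:ℝ) ≤ Real.sqrt n := Real.sqrt_nonneg n
          exact mul_le_mul_of_nonneg_right h4 hsn
      _ = Real.sqrt (Real.pi ^ 3 / (2 * a)) := by
          rw [div_mul_cancel₀]
          have : (0:ℝ) < n := by exact_mod_cast hn
          positivity
  calc P {ω | ∑ j ∈ Finset.range n, X j ω = k}
      = ENNReal.ofReal (q n k) := (ENNReal.ofReal_toReal (measure_ne_top _ _)).symm
    _ ≤ ENNReal.ofReal (K / Real.sqrt n) := ENNReal.ofReal_le_ofReal hreal
end PartBmain

open MeasureTheory ProbabilityTheory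
open scoped ENNReal


/-- Critical Galton–Watson total progeny, via the standard random-walk
(hitting time) representation: the total population size starting from one individual is
`S = inf{ n ≥ 1 : X 0 + ⋯ + X (n-1) = n - 1 }` for the i.i.d. offspring numbers `(X j)`.
If `E[X 0] = 1`, `X 0` is not a.s. equal to `1`, and `X 0` has a finite second moment
(equivalently finite variance), then `P(S = n) ≤ c / n^{3/2}` for all `n ≥ 1`. -/
theorem critical_GW_total_size_polynomial_bound
    {Ω : Type*} [MeasurableSpace Ω] (P : Measure Ω) [IsProbabilityMeasure P]
    (X : ℕ → Ω → ℕ) (hmeas : ∀ j, Measurable (X j))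
    (hiid : iIndepFun X P)
    (hident : ∀ j, IdentDistrib (X j) (X 0) P P)
    (hcrit : ∫⁻ ω, (X 0 ω : ℝ≥0∞) ∂P = 1)
    (hnondeg : ¬ (∀ᵐ ω ∂P, X 0 ω = 1))
    (hvar : ∫⁻ ω, ((X 0 ω : ℝ≥0∞)) ^ 2 ∂P < ⊤) :
    ∃ c : ℝ, ∀ n : ℕ, 1 ≤ n →
      P {ω | sInf {m : ℕ | 1 ≤ m ∧ ∑ j ∈ Finset.range m, X j ω = m - 1} = n}
        ≤ ENNReal.ofReal (c / (n : ℝ) ^ ((3 : ℝ) / 2)) := by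
  obtain ⟨K, hKpos, hK⟩ := partB hmeas hiid hident hcrit hnondeg
  refine ⟨K, fun n hn => ?_⟩
  have hnpos : (0 : ℝ) < n := by exact_mod_cast hn
  have hA := partA hmeas hiid hident hn
  have hB := hK n (n - 1) hn
  have hchain : (n : ℝ≥0∞) *
      P {ω | sInf {m : ℕ | 1 ≤ m ∧ ∑ j ∈ Finset.range m, X j ω = m - 1} = n}
        ≤ ENNReal.ofReal (K / Real.sqrt n) := hA.trans hB
  have hdiv : P {ω | sInf {m : ℕ | 1 ≤ m ∧ ∑ j ∈ Finset.range m, X j ω = m - 1} = n}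
      ≤ ENNReal.ofReal (K / Real.sqrt n) / (n : ℝ≥0∞) := by
    rw [ENNReal.le_div_iff_mul_le (Or.inl (by exact_mod_cast (by omega : n ≠ 0) : (n : ℝ≥0∞) ≠ 0))
      (Or.inl (ENNReal.natCast_ne_top n))]
    rw [mul_comm]
    exact hchain
  refine hdiv.trans (le_of_eq ?_)
  rw [show ((n : ℝ≥0∞)) = ENNReal.ofReal ((n : ℝ)) from (ENNReal.ofReal_natCast n).symm]
  rw [← ENNReal.ofReal_div_of_pos hnpos]
  congr 1
  rw [show ((n : ℝ)) ^ ((3 : ℝ) / 2) = (n : ℝ) * Real.sqrt n from ?_]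
  · rw [div_div]
    congr 1
    ring
  · rw [show (3 : ℝ) / 2 = 1 + 1 / 2 by norm_num, Real.rpow_add hnpos, Real.rpow_one,
      Real.sqrt_eq_rpow]
end
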